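/- arXiv:2505.05651 — 9 statements merged into one kernel-verified Lean document; each statement's English description precedes it below -/
import Mathlib

section
/- For every permutation π of {1,...,n}, the depth of π is at most its inversion number: ∑_{i : π(i) > i} (π(i) − i) ≤ #{(i,j) : i < j and π(i) > π(j)}. -/
open Finset

/-- The depth of a permutation: `∑_{i : π(i) > i} (π(i) − i)`. -/
def permDepth {n : ℕ} (π : Equiv.Perm (Fin n)) : ℕ :=
  ∑ i ∈ Finset.univ.filter (fun i : Fin n => (i : ℕ) < (π i : ℕ)), ((π i : ℕ) - (i : ℕ))

/-- The inversion number (Coxeter length) of a permutation. -/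
def permInv {n : ℕ} (π : Equiv.Perm (Fin n)) : ℕ :=
  (Finset.univ.filter (fun p : Fin n × Fin n => p.1 < p.2 ∧ π p.2 < π p.1)).card

lemma key_bound {n : ℕ} (π : Equiv.Perm (Fin n)) (i : Fin n) :
    (π i : ℕ) - (i : ℕ) ≤ (Finset.univ.filter fun j : Fin n => i < j ∧ π j < π i).card := by
  have hS : (Finset.univ.filter fun j : Fin n => π j < π i).card = (π i : ℕ) := by
    have himg : (Finset.univ.filter fun j : Fin n => π j < π i).image π
        = Finset.univ.filter fun v : Fin n => v < π i := by
      ext v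
      simp only [mem_image, mem_filter, mem_univ, true_and]
      constructor
      · rintro ⟨j, hj, rfl⟩; exact hj
      · intro hv; exact ⟨π.symm v, by simpa using hv, by simp⟩
    have hcard := Finset.card_image_of_injective
      (Finset.univ.filter fun j : Fin n => π j < π i) π.injective
    rw [himg] at hcard
    rw [← hcard]
    have : (Finset.univ.filter fun v : Fin n => v < π i) = Finset.Iio (π i) := by
      ext v; simp
    rw [this, Fin.card_Iio]
  have hsub : (Finset.univ.filter fun j : Fin n => π j < π i)
      ⊆ (Finset.univ.filter fun j : Fin n => (j : ℕ) < (i : ℕ))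
        ∪ (Finset.univ.filter fun j : Fin n => i < j ∧ π j < π i) := by
    intro j hj
    simp only [mem_filter, mem_univ, true_and] at hj
    have hne : j ≠ i := fun h => by simp [h] at hj
    rcases lt_or_gt_of_ne hne with h | h
    · exact mem_union_left _ (by simp only [mem_filter, mem_univ, true_and]; exact Fin.lt_def.mp h)
    · exact mem_union_right _ (by simp [h, hj])
  have hIio : (Finset.univ.filter fun j : Fin n => (j : ℕ) < (i : ℕ)).card = (i : ℕ) := by
    have : (Finset.univ.filter fun j : Fin n => (j : ℕ) < (i : ℕ)) = Finset.Iio i := by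
      ext v; simp only [mem_filter, mem_univ, true_and, Finset.mem_Iio, Fin.lt_def]
    rw [this, Fin.card_Iio]
  have := (Finset.card_le_card hsub).trans (Finset.card_union_le _ _)
  omega

/-- Upper bound of the Diaconis–Graham inequalities: depth ≤ inversion number. -/
theorem depth_le_inversions (n : ℕ) (π : Equiv.Perm (Fin n)) :
    permDepth π ≤ permInv π := by
  have hinv : permInv π
      = ∑ i : Fin n, (Finset.univ.filter fun j : Fin n => i < j ∧ π j < π i).card := by
    unfold permInv
    rw [Finset.card_filter]
    rw [← Finset.univ_product_univ, Finset.sum_product]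
    simp only [Finset.card_filter]
  calc permDepth π ≤ ∑ i ∈ Finset.univ.filter (fun i : Fin n => (i : ℕ) < (π i : ℕ)),
        (Finset.univ.filter fun j : Fin n => i < j ∧ π j < π i).card :=
      Finset.sum_le_sum fun i _ => key_bound π i
    _ ≤ ∑ i : Fin n, (Finset.univ.filter fun j : Fin n => i < j ∧ π j < π i).card :=
      Finset.sum_le_sum_of_subset (Finset.filter_subset _ _)
    _ = permInv π := hinv.symm
end

section
/- A permutation π ∈ S_n avoids the pattern 321 if and only if dp(π) = ℓ_S(π), i.e., ∑_{i : π(i) > i} (π(i) − i) equals the number of inversions of π. -/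
open Finset

/-- `π` avoids the pattern 321: no indices `i < j < k` with `π i > π j > π k`. -/
def Avoids321 {n : ℕ} (π : Equiv.Perm (Fin n)) : Prop :=
  ¬ ∃ i j k : Fin n, i < j ∧ j < k ∧ π k < π j ∧ π j < π i

/-- inversions with left index `j` -/
private def dRight {n : ℕ} (π : Equiv.Perm (Fin n)) (j : Fin n) : ℕ :=
  (Finset.univ.filter (fun k : Fin n => j < k ∧ π k < π j)).card

/-- non-inversions ending at `j` -/
private def aLeft {n : ℕ} (π : Equiv.Perm (Fin n)) (j : Fin n) : ℕ :=
  (Finset.univ.filter (fun i : Fin n => i < j ∧ π i < π j)).card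

private lemma card_lt_idx {n : ℕ} (j : Fin n) :
    (Finset.univ.filter fun i : Fin n => i < j).card = (j : ℕ) := by
  rw [Finset.filter_gt_eq_Iio, Fin.card_Iio]

private lemma card_val_lt {n : ℕ} (π : Equiv.Perm (Fin n)) (x : Fin n) :
    (Finset.univ.filter fun m : Fin n => π m < x).card = (x : ℕ) := by
  rw [← Fin.card_Iio x, ← Finset.filter_gt_eq_Iio]
  apply Finset.card_bij (fun m _ => π m)
  · intro a ha; simp_all
  · intro a _ b _ h; exact π.injective h
  · intro b hb; exact ⟨π.symm b, by simp_all, by simp⟩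

private lemma d_add_a {n : ℕ} (π : Equiv.Perm (Fin n)) (j : Fin n) :
    dRight π j + aLeft π j = (π j : ℕ) := by
  rw [← card_val_lt π (π j)]
  rw [dRight, aLeft, ← Finset.card_union_of_disjoint]
  · congr 1
    ext m
    simp only [Finset.mem_union, Finset.mem_filter, Finset.mem_univ, true_and]
    constructor
    · rintro (⟨h1, h2⟩ | ⟨h1, h2⟩) <;> exact h2
    · intro h
      rcases lt_trichotomy j m with hm | hm | hm
      · exact Or.inl ⟨hm, h⟩
      · exact absurd (hm ▸ h) (lt_irrefl _)
      · exact Or.inr ⟨hm, h⟩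
  · rw [Finset.disjoint_left]
    intro m hm hm'
    simp only [Finset.mem_filter] at hm hm'
    exact absurd (hm.2.1.trans hm'.2.1) (lt_irrefl _)

private lemma a_le {n : ℕ} (π : Equiv.Perm (Fin n)) (j : Fin n) :
    aLeft π j ≤ (j : ℕ) := by
  rw [← card_lt_idx j]
  apply Finset.card_le_card
  intro i hi
  simp only [Finset.mem_filter] at hi ⊢
  exact ⟨hi.1, hi.2.1⟩

private lemma inv_eq_sum_d {n : ℕ} (π : Equiv.Perm (Fin n)) :
    permInv π = ∑ j : Fin n, dRight π j := by
  rw [permInv, Finset.card_filter]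
  rw [Fintype.sum_prod_type]
  congr 1
  ext j
  rw [dRight, Finset.card_filter]

private lemma depth_eq_sum_m {n : ℕ} (π : Equiv.Perm (Fin n)) :
    permDepth π = ∑ j : Fin n, ((π j : ℕ) - (j : ℕ)) := by
  rw [permDepth, Finset.sum_filter_of_ne]
  intro i _ h
  by_contra hc
  push_neg at hc
  omega

/-- `j` is the middle of a 321 pattern -/
private def Mid {n : ℕ} (π : Equiv.Perm (Fin n)) (j : Fin n) : Prop :=
  (∃ i, i < j ∧ π j < π i) ∧ (∃ k, j < k ∧ π k < π j)

private lemma m_le_d {n : ℕ} (π : Equiv.Perm (Fin n)) (j : Fin n) :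
    (π j : ℕ) - (j : ℕ) ≤ dRight π j := by
  have h1 := d_add_a π j
  have h2 := a_le π j
  omega

private lemma m_eq_d_iff {n : ℕ} (π : Equiv.Perm (Fin n)) (j : Fin n) :
    (π j : ℕ) - (j : ℕ) = dRight π j ↔ ¬ Mid π j := by
  have h1 := d_add_a π j
  have h2 := a_le π j
  -- dRight π j > 0 ↔ ∃ k, j < k ∧ π k < π j
  have hd : 0 < dRight π j ↔ ∃ k, j < k ∧ π k < π j := by
    rw [dRight, Finset.card_pos]
    constructor
    · rintro ⟨k, hk⟩; simp only [Finset.mem_filter] at hk; exact ⟨k, hk.2⟩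
    · rintro ⟨k, hk⟩; exact ⟨k, by simp [hk]⟩
  have ha : aLeft π j < (j : ℕ) ↔ ∃ i, i < j ∧ π j < π i := by
    constructor
    · intro h
      by_contra hc
      push_neg at hc
      have : (Finset.univ.filter fun i : Fin n => i < j) ⊆
          (Finset.univ.filter fun i : Fin n => i < j ∧ π i < π j) := by
        intro i hi
        simp only [Finset.mem_filter, Finset.mem_univ, true_and] at hi ⊢
        refine ⟨hi, ?_⟩
        rcases lt_trichotomy (π i) (π j) with h' | h' | h'
        · exact h'
        · exact absurd (π.injective h') (ne_of_lt hi)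
        · exact absurd h' (not_lt.mpr (hc i hi))
      have := Finset.card_le_card this
      rw [card_lt_idx] at this
      rw [aLeft] at h
      omega
    · rintro ⟨i, hij, hpi⟩
      have : (Finset.univ.filter fun i : Fin n => i < j ∧ π i < π j) ⊆
          (Finset.univ.filter fun i' : Fin n => i' < j) \ {i} := by
        intro x hx
        simp only [Finset.mem_filter, Finset.mem_univ, true_and, Finset.mem_sdiff,
          Finset.mem_singleton] at hx ⊢
        refine ⟨hx.1, ?_⟩
        rintro rfl
        exact absurd hx.2 (not_lt.mpr hpi.le)
      have hc := Finset.card_le_card this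
      have hi_mem : i ∈ Finset.univ.filter fun i' : Fin n => i' < j := by simp [hij]
      rw [Finset.card_sdiff_of_subset (by simpa using hi_mem), Finset.card_singleton, card_lt_idx] at hc
      have hj : 0 < (j : ℕ) := by
        rcases Nat.eq_zero_or_pos (j : ℕ) with h0 | h0
        · exact absurd hij (by simp [Fin.lt_def, h0])
        · exact h0
      rw [aLeft] at *
      omega
  constructor
  · intro heq ⟨hiex, hkex⟩
    rw [← ha] at hiex
    rw [← hd] at hkex
    omega
  · intro hnot
    rw [Mid, not_and_or, ← ha, ← hd] at hnot
    push_neg at hnot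
    omega

/-- A permutation avoids 321 iff its depth equals its inversion number. -/
theorem avoids321_iff_depth_eq_inversions (n : ℕ) (π : Equiv.Perm (Fin n)) :
    Avoids321 π ↔ permDepth π = permInv π := by
  rw [depth_eq_sum_m, inv_eq_sum_d]
  rw [Finset.sum_eq_sum_iff_of_le (fun j _ => m_le_d π j)]
  constructor
  · intro hav j _
    rw [m_eq_d_iff]
    rintro ⟨⟨i, hij, hpi⟩, ⟨k, hjk, hpk⟩⟩
    exact hav ⟨i, j, k, hij, hjk, hpk, hpi⟩
  · intro h ⟨i, j, k, hij, hjk, hpk, hpi⟩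
    have := (m_eq_d_iff π j).mp (h j (Finset.mem_univ j))
    exact this ⟨⟨i, hij, hpi⟩, ⟨k, hjk, hpk⟩⟩
end

section
/- A cyclic permutation (an n-cycle) π ∈ S_n avoids 321 if and only if dp(π) = ℓ_S(π) and ℓ_T(π) = n − 1. -/
/-- Reflection length: minimal number of transpositions with product `π`. -/
noncomputable def reflLength {n : ℕ} (π : Equiv.Perm (Fin n)) : ℕ :=
  sInf {k : ℕ | ∃ l : List (Equiv.Perm (Fin n)),
    l.length = k ∧ (∀ τ ∈ l, τ.IsSwap) ∧ l.prod = π}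

/-- `π` is cyclic: its cycle decomposition consists of a single n-cycle,
i.e. all points lie on one cycle. -/
def IsCyclicPerm {n : ℕ} (π : Equiv.Perm (Fin n)) : Prop :=
  ∀ x y : Fin n, π.SameCycle x y

namespace Aux321

open Finset Equiv Module

variable {n : ℕ}

/-! ### Combinatorial part: depth = inversions iff 321-avoiding -/

def Cc (π : Equiv.Perm (Fin n)) (i : Fin n) : ℕ :=
  (Finset.univ.filter fun j => i < j ∧ π j < π i).card

def Dd (π : Equiv.Perm (Fin n)) (i : Fin n) : ℕ :=
  (Finset.univ.filter fun j => j < i ∧ π j < π i).card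

lemma filter_lt_card (x : Fin n) :
    (Finset.univ.filter fun v : Fin n => v < x).card = (x : ℕ) := by
  have : (Finset.univ.filter fun v : Fin n => v < x) = Finset.Iio x := by
    ext v; simp
  rw [this, Fin.card_Iio]

lemma card_val_lt (π : Equiv.Perm (Fin n)) (i : Fin n) :
    (Finset.univ.filter fun j : Fin n => π j < π i).card = (π i : ℕ) := by
  have h : (Finset.univ.filter fun j : Fin n => π j < π i)
      = (Finset.univ.filter fun v : Fin n => v < π i).image π.symm := by
    ext j
    simp only [Finset.mem_image, Finset.mem_filter, Finset.mem_univ, true_and]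
    constructor
    · intro hj; exact ⟨π j, hj, π.symm_apply_apply j⟩
    · rintro ⟨a, ha, rfl⟩; rwa [π.apply_symm_apply]
  rw [h, Finset.card_image_of_injective _ π.symm.injective, filter_lt_card]

lemma CD (π : Equiv.Perm (Fin n)) (i : Fin n) :
    Cc π i + Dd π i = (π i : ℕ) := by
  rw [Cc, Dd, ← card_val_lt π i, ← Finset.card_union_of_disjoint]
  · congr 1
    ext j
    simp only [Finset.mem_union, Finset.mem_filter, Finset.mem_univ, true_and]
    constructor
    · rintro (⟨_, h⟩ | ⟨_, h⟩) <;> exact h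
    · intro h
      rcases lt_trichotomy i j with hij | rfl | hij
      · exact Or.inl ⟨hij, h⟩
      · exact absurd h (lt_irrefl _)
      · exact Or.inr ⟨hij, h⟩
  · rw [Finset.disjoint_filter]
    rintro j _ ⟨h1, _⟩ ⟨h2, _⟩
    exact absurd (h1.trans h2) (lt_irrefl _)

lemma Dd_le (π : Equiv.Perm (Fin n)) (i : Fin n) : Dd π i ≤ (i : ℕ) := by
  rw [← filter_lt_card i]
  apply Finset.card_le_card
  intro j hj
  simp only [Finset.mem_filter] at *
  exact ⟨hj.1, hj.2.1⟩

lemma e_le_C (π : Equiv.Perm (Fin n)) (i : Fin n) : (π i : ℕ) - (i : ℕ) ≤ Cc π i := by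
  have h1 := CD π i
  have h2 := Dd_le π i
  omega

lemma inv_eq (π : Equiv.Perm (Fin n)) : permInv π = ∑ i, Cc π i := by
  rw [permInv, Finset.card_filter, Fintype.sum_prod_type]
  simp only [Cc, Finset.card_filter]

lemma depth_eq (π : Equiv.Perm (Fin n)) : permDepth π = ∑ i, ((π i : ℕ) - (i : ℕ)) := by
  rw [permDepth]
  apply Finset.sum_subset (Finset.filter_subset _ _)
  intro i _ hi
  simp only [Finset.mem_filter, Finset.mem_univ, true_and, not_lt] at hi
  omega

lemma C_eq_of_avoids {π : Equiv.Perm (Fin n)} (h : Avoids321 π) (i : Fin n) :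
    Cc π i = (π i : ℕ) - (i : ℕ) := by
  by_contra hne
  have hCD := CD π i
  have hD := Dd_le π i
  have hC1 : 1 ≤ Cc π i ∧ Dd π i < (i : ℕ) := by
    have : (π i : ℕ) - (i : ℕ) ≤ Cc π i := by omega
    omega
  obtain ⟨k, hk⟩ : ∃ k, k ∈ Finset.univ.filter fun j => i < j ∧ π j < π i := by
    apply Finset.card_pos.mp
    rw [← Cc] at *
    omega
  simp only [Finset.mem_filter, Finset.mem_univ, true_and] at hk
  obtain ⟨j, hji, hj⟩ : ∃ j, j < i ∧ π i < π j := by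
    by_contra hno
    push_neg at hno
    have : Dd π i = (i : ℕ) := by
      rw [Dd, ← filter_lt_card i]
      congr 1
      ext j
      simp only [Finset.mem_filter, Finset.mem_univ, true_and, and_iff_left_iff_imp]
      intro hji
      have hle := hno j hji
      exact lt_of_le_of_ne hle (fun he => (ne_of_lt hji) (π.injective he))
    omega
  exact h ⟨j, i, k, hji, hk.1, hk.2, hj⟩

lemma C_gt_of_pattern {π : Equiv.Perm (Fin n)} {i j k : Fin n}
    (hij : i < j) (hjk : j < k) (h1 : π k < π j) (h2 : π j < π i) :
    (π j : ℕ) - (j : ℕ) < Cc π j := by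
  have hCD := CD π j
  have hC1 : 1 ≤ Cc π j := by
    apply Finset.card_pos.mpr
    exact ⟨k, by simp only [Finset.mem_filter, Finset.mem_univ, true_and]; exact ⟨hjk, h1⟩⟩
  have hD : Dd π j ≤ (j : ℕ) - 1 := by
    have hsub : (Finset.univ.filter fun j' => j' < j ∧ π j' < π j)
        ⊆ (Finset.univ.filter fun v : Fin n => v < j).erase i := by
      intro x hx
      simp only [Finset.mem_filter, Finset.mem_univ, true_and, Finset.mem_erase] at *
      refine ⟨fun he => ?_, hx.1⟩
      subst he; exact absurd hx.2 (not_lt.mpr (le_of_lt h2))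
    calc Dd π j ≤ _ := Finset.card_le_card hsub
    _ ≤ (j : ℕ) - 1 := by
        rw [Finset.card_erase_of_mem (by simp [hij]), filter_lt_card]
  have hj1 : 1 ≤ (j : ℕ) := by
    have : (i : ℕ) < (j : ℕ) := hij
    omega
  omega

lemma avoids_iff_depth_eq_inv (π : Equiv.Perm (Fin n)) :
    Avoids321 π ↔ permDepth π = permInv π := by
  rw [depth_eq, inv_eq]
  constructor
  · intro h
    exact Finset.sum_congr rfl fun i _ => (C_eq_of_avoids h i).symm
  · intro hsum hpat
    obtain ⟨i, j, k, hij, hjk, h1, h2⟩ := hpat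
    have hlt : (∑ i, ((π i : ℕ) - (i : ℕ))) < ∑ i, Cc π i := by
      apply Finset.sum_lt_sum (fun i _ => e_le_C π i)
      exact ⟨j, Finset.mem_univ j, C_gt_of_pattern hij hjk h1 h2⟩
    omega

/-! ### Reflection length part -/

lemma cycle_swaps (m : ℕ) : ∀ (π : Equiv.Perm (Fin n)), π.IsCycle → π.support.card = m →
    ∃ l : List (Equiv.Perm (Fin n)),
      l.length = m - 1 ∧ (∀ τ ∈ l, τ.IsSwap) ∧ l.prod = π := by
  induction m using Nat.strong_induction_on with
  | _ m ih =>
    intro π hπ hm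
    have h2 : 2 ≤ m := hm ▸ hπ.two_le_card_support
    obtain ⟨x, hx, -⟩ := id hπ
    rcases eq_or_lt_of_le h2 with h2' | h3
    · have hsw : π.IsSwap := Equiv.Perm.card_support_eq_two.mp (hm.trans h2'.symm)
      exact ⟨[π], by simp [← h2'], by simpa using hsw, by simp⟩
    · have hffx : π (π x) ≠ x := by
        intro h
        have := hπ.eq_swap_of_apply_apply_eq_self hx h
        have hc : π.support.card = 2 := by
          rw [this]
          exact Equiv.Perm.card_support_swap (Ne.symm hx)
        omega
      have hg : (Equiv.swap x (π x) * π).IsCycle := hπ.swap_mul hx hffx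
      have hgs : (Equiv.swap x (π x) * π).support = π.support \ {x} :=
        Equiv.Perm.support_swap_mul_eq π x hffx
      have hgc : (Equiv.swap x (π x) * π).support.card = m - 1 := by
        rw [hgs, Finset.card_sdiff_of_subset (by simpa using Equiv.Perm.mem_support.mpr hx)]
        simp [hm]
      obtain ⟨l, hl, hls, hlp⟩ := ih (m - 1) (by omega) _ hg hgc
      refine ⟨Equiv.swap x (π x) :: l, by simp [hl]; omega, ?_, ?_⟩
      · intro τ hτ
        rcases List.mem_cons.mp hτ with rfl | hτ
        · exact ⟨x, π x, hx.symm, rfl⟩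
        · exact hls τ hτ
      · rw [List.prod_cons, hlp, ← mul_assoc, Equiv.swap_mul_self, one_mul]

def fixSpace (σ : Equiv.Perm (Fin n)) : Submodule ℚ (Fin n → ℚ) where
  carrier := {f | ∀ x, f (σ x) = f x}
  add_mem' := fun hf hg x => by simp [hf x, hg x]
  zero_mem' := fun x => rfl
  smul_mem' := fun c f hf x => by simp [hf x]

lemma fix_one : fixSpace (1 : Equiv.Perm (Fin n)) = ⊤ := by
  ext f; simp [fixSpace]

lemma fix_mul (σ τ : Equiv.Perm (Fin n)) :
    fixSpace σ ⊓ fixSpace τ ≤ fixSpace (σ * τ) := by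
  rintro f ⟨hf1, hf2⟩ x
  simp only [Equiv.Perm.mul_apply]
  rw [hf1 (τ x), hf2 x]

lemma finrank_fix_swap {σ : Equiv.Perm (Fin n)} (hs : σ.IsSwap) :
    n ≤ finrank ℚ (fixSpace σ) + 1 := by
  obtain ⟨a, b, hab, rfl⟩ := hs
  set L : (Fin n → ℚ) →ₗ[ℚ] ℚ :=
    (LinearMap.proj a : (Fin n → ℚ) →ₗ[ℚ] ℚ) - (LinearMap.proj b : (Fin n → ℚ) →ₗ[ℚ] ℚ) with hL
  have hker : LinearMap.ker L ≤ fixSpace (Equiv.swap a b) := by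
    intro f hf x
    have hfe : f a = f b := by
      have : L f = 0 := hf
      simp only [hL, LinearMap.sub_apply, LinearMap.proj_apply] at this
      linarith
    rcases eq_or_ne x a with rfl | hxa
    · rw [Equiv.swap_apply_left, hfe]
    rcases eq_or_ne x b with rfl | hxb
    · rw [Equiv.swap_apply_right, hfe]
    · rw [Equiv.swap_apply_of_ne_of_ne hxa hxb]
  have h1 := LinearMap.finrank_range_add_finrank_ker L
  have h2 : finrank ℚ (LinearMap.range L) ≤ 1 := by
    simpa using Submodule.finrank_le (LinearMap.range L)
  have h3 : finrank ℚ (LinearMap.ker L) ≤ finrank ℚ (fixSpace (Equiv.swap a b)) :=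
    Submodule.finrank_mono hker
  rw [Module.finrank_fintype_fun_eq_card, Fintype.card_fin] at h1
  omega

lemma finrank_fix_prod (l : List (Equiv.Perm (Fin n))) (hl : ∀ τ ∈ l, τ.IsSwap) :
    n ≤ finrank ℚ (fixSpace l.prod) + l.length := by
  induction l with
  | nil =>
    rw [List.prod_nil, fix_one, List.length_nil, add_zero, finrank_top,
      Module.finrank_fintype_fun_eq_card, Fintype.card_fin]
  | cons τ l ih =>
    have hτ := finrank_fix_swap (hl τ (List.mem_cons_self))
    have hrec := ih (fun σ hσ => hl σ (List.mem_cons_of_mem τ hσ))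
    have hinf := Submodule.finrank_sup_add_finrank_inf_eq (fixSpace τ) (fixSpace l.prod)
    have hsup : finrank ℚ ↥(fixSpace τ ⊔ fixSpace l.prod) ≤ n := by
      have := Submodule.finrank_le (fixSpace τ ⊔ fixSpace l.prod)
      rwa [Module.finrank_fintype_fun_eq_card, Fintype.card_fin] at this
    have hmono : finrank ℚ ↥(fixSpace τ ⊓ fixSpace l.prod)
        ≤ finrank ℚ (fixSpace (τ * l.prod)) := Submodule.finrank_mono (fix_mul _ _)
    rw [List.prod_cons]
    simp only [List.length_cons]
    omega

lemma fix_pow {σ : Equiv.Perm (Fin n)} {f : Fin n → ℚ} (hf : f ∈ fixSpace σ)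
    (k : ℕ) (x : Fin n) : f ((σ ^ k) x) = f x := by
  induction k generalizing x with
  | zero => simp
  | succ k ih =>
    rw [pow_succ', Equiv.Perm.mul_apply, hf ((σ ^ k) x), ih x]

lemma finrank_fix_cyclic {π : Equiv.Perm (Fin n)} (hcyc : IsCyclicPerm π) (hn : 1 ≤ n) :
    finrank ℚ (fixSpace π) ≤ 1 := by
  set x₀ : Fin n := ⟨0, hn⟩
  set E : (fixSpace π) →ₗ[ℚ] ℚ :=
    (LinearMap.proj x₀ : (Fin n → ℚ) →ₗ[ℚ] ℚ).comp (fixSpace π).subtype with hE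
  have hinj : Function.Injective E := by
    rw [← LinearMap.ker_eq_bot, LinearMap.ker_eq_bot']
    rintro ⟨f, hf⟩ hfE
    have h0 : f x₀ = 0 := hfE
    ext x
    obtain ⟨k, -, hk⟩ := (hcyc x₀ x).exists_pow_eq'
    show f x = 0
    rw [← hk, fix_pow hf k x₀, h0]
  have := LinearMap.finrank_le_finrank_of_injective hinj
  simpa using this

lemma reflLength_cyclic (π : Equiv.Perm (Fin n)) (hcyc : IsCyclicPerm π) :
    reflLength π = n - 1 := by
  rcases le_or_gt n 1 with hn | hn
  · have hπ1 : π = 1 := by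
      ext x
      have h1 := (π x).isLt
      have h2 := x.isLt
      omega
    subst hπ1
    have h0 : (0 : ℕ) ∈ {k : ℕ | ∃ l : List (Equiv.Perm (Fin n)),
        l.length = k ∧ (∀ τ ∈ l, τ.IsSwap) ∧ l.prod = 1} :=
      ⟨[], rfl, by simp, rfl⟩
    rw [reflLength, Nat.sInf_eq_zero.mpr (Or.inl h0)]
    omega
  · -- n ≥ 2
    have hsupp : π.support = Finset.univ := by
      ext x
      simp only [Equiv.Perm.mem_support, Finset.mem_univ, iff_true]
      intro hfix
      obtain ⟨y, hxy⟩ : ∃ y : Fin n, y ≠ x := by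
        rcases eq_or_ne (x : ℕ) 0 with h | h
        · exact ⟨⟨1, by omega⟩, by simp [Fin.ext_iff]; omega⟩
        · exact ⟨⟨0, by omega⟩, by simp [Fin.ext_iff]; omega⟩
      obtain ⟨k, hk⟩ := hcyc x y
      have hfixk := Equiv.Perm.zpow_apply_eq_self_of_apply_eq_self hfix k
      rw [hk] at hfixk
      exact hxy hfixk
    have hcycle : π.IsCycle := by
      refine ⟨⟨0, by omega⟩, ?_, fun y _ => hcyc _ y⟩
      have : (⟨0, by omega⟩ : Fin n) ∈ π.support := hsupp ▸ Finset.mem_univ _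
      exact Equiv.Perm.mem_support.mp this
    have hcard : π.support.card = n := by
      rw [hsupp, Finset.card_univ, Fintype.card_fin]
    obtain ⟨l, hlen, hsw, hprod⟩ := cycle_swaps n π hcycle hcard
    have hmemS : (n - 1) ∈ {k : ℕ | ∃ l : List (Equiv.Perm (Fin n)),
        l.length = k ∧ (∀ τ ∈ l, τ.IsSwap) ∧ l.prod = π} := ⟨l, hlen, hsw, hprod⟩
    have hub : reflLength π ≤ n - 1 := Nat.sInf_le hmemS
    have hlb : n - 1 ≤ reflLength π := by
      obtain ⟨l', hl'len, hl'sw, hl'prod⟩ := Nat.sInf_mem (⟨n - 1, hmemS⟩ : Set.Nonempty _)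
      have hbound := finrank_fix_prod l' hl'sw
      rw [hl'prod] at hbound
      have hfr := finrank_fix_cyclic hcyc (by omega)
      rw [reflLength, ← hl'len]
      omega
    omega

end Aux321

/-- A cyclic permutation avoids 321 iff dp(π) = ℓ_S(π) and ℓ_T(π) = n − 1. -/
theorem cyclic_avoids321_iff (n : ℕ) (π : Equiv.Perm (Fin n))
    (hcyc : IsCyclicPerm π) :
    Avoids321 π ↔ (permDepth π = permInv π ∧ reflLength π = n - 1) := by
  constructor
  · intro h
    exact ⟨(Aux321.avoids_iff_depth_eq_inv π).mp h, Aux321.reflLength_cyclic π hcyc⟩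
  · rintro ⟨h1, -⟩
    exact (Aux321.avoids_iff_depth_eq_inv π).mpr h1
end

section
/- For all m, n ≥ 1, c_n · c_m ≤ c_{n+m}, where c_k denotes the number of k-cycles in S_k whose one-line notation avoids the pattern 321. -/
/-- `c k`: the number of `k`-cycles in `S_k` (permutations whose cycle
decomposition is a single cycle) avoiding 321 in one-line notation. -/
noncomputable def c321 (k : ℕ) : ℕ :=
  Nat.card {π : Equiv.Perm (Fin k) // (∀ x y : Fin k, π.SameCycle x y) ∧ Avoids321 π}

open Equiv

/-- Merging two cycles with a transposition. -/
lemma merge_sameCycle {α : Type*} [Fintype α] [DecidableEq α] (f : Equiv.Perm α)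
    (a b : α) (P : α → Prop)
    (hPf : ∀ x, P (f x) ↔ P x) (ha : P a) (hb : ¬ P b)
    (hA : ∀ x, P x → f.SameCycle a x) (hB : ∀ x, ¬ P x → f.SameCycle b x) :
    ∀ x y, (Equiv.swap a b * f).SameCycle x y := by
  set g := Equiv.swap a b * f with hg
  have hstep : ∀ x, g x = Equiv.swap a b (f x) := fun x => rfl
  have key1 : ∀ k x, P x → (f ^ (k + 1)) x = a → g.SameCycle x b := by
    intro k
    induction k with
    | zero =>
      intro x hx hfx
      rw [pow_one] at hfx
      have : g x = b := by rw [hstep, hfx, Equiv.swap_apply_left]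
      exact ⟨1, by simpa using this⟩
    | succ k ih =>
      intro x hx hfx
      by_cases hfa : f x = a
      · have : g x = b := by rw [hstep, hfa, Equiv.swap_apply_left]
        exact ⟨1, by simpa using this⟩
      · have hPfx : P (f x) := (hPf x).mpr hx
        have hfb : f x ≠ b := fun h => hb (h ▸ hPfx)
        have hgx : g x = f x := by rw [hstep, Equiv.swap_apply_of_ne_of_ne hfa hfb]
        have h1 : g.SameCycle x (f x) := ⟨1, by simpa using hgx⟩
        have h2 : (f ^ (k + 1)) (f x) = a := by
          rw [← Equiv.Perm.mul_apply, ← pow_succ]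
          exact hfx
        exact h1.trans (ih (f x) hPfx h2)
  have key2 : ∀ k x, ¬ P x → (f ^ (k + 1)) x = b → g.SameCycle x a := by
    intro k
    induction k with
    | zero =>
      intro x hx hfx
      rw [pow_one] at hfx
      have : g x = a := by rw [hstep, hfx, Equiv.swap_apply_right]
      exact ⟨1, by simpa using this⟩
    | succ k ih =>
      intro x hx hfx
      by_cases hfb : f x = b
      · have : g x = a := by rw [hstep, hfb, Equiv.swap_apply_right]
        exact ⟨1, by simpa using this⟩
      · have hPfx : ¬ P (f x) := fun h => hx ((hPf x).mp h)
        have hfa : f x ≠ a := fun h => hPfx (h ▸ ha)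
        have hgx : g x = f x := by rw [hstep, Equiv.swap_apply_of_ne_of_ne hfa hfb]
        have h1 : g.SameCycle x (f x) := ⟨1, by simpa using hgx⟩
        have h2 : (f ^ (k + 1)) (f x) = b := by
          rw [← Equiv.Perm.mul_apply, ← pow_succ]
          exact hfx
        exact h1.trans (ih (f x) hPfx h2)
  have exP : ∀ {x y : α}, f.SameCycle x y → ∃ k : ℕ, (f ^ (k + 1)) x = y := by
    intro x y h
    obtain ⟨i, hi0, _, hie⟩ := Equiv.Perm.SameCycle.exists_pow_eq'' h
    obtain ⟨k, rfl⟩ := Nat.exists_eq_add_of_lt hi0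
    exact ⟨k, by simpa [Nat.add_comm] using hie⟩
  have hab : g.SameCycle a b := by
    obtain ⟨k, hk⟩ := exP (hA a ha)
    exact key1 k a ha hk
  have hxa : ∀ x, g.SameCycle x a := by
    intro x
    by_cases hx : P x
    · obtain ⟨k, hk⟩ := exP (hA x hx).symm
      exact (key1 k x hx hk).trans hab.symm
    · obtain ⟨k, hk⟩ := exP (hB x hx).symm
      exact key2 k x hx hk
  exact fun x y => (hxa x).trans (hxa y).symm

variable {n m : ℕ}

/-- The direct sum of two permutations, as a permutation of `Fin (n + m)`. -/
def blockPerm (σ : Equiv.Perm (Fin n)) (τ : Equiv.Perm (Fin m)) :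
    Equiv.Perm (Fin (n + m)) :=
  finSumFinEquiv.permCongr (Equiv.Perm.sumCongr σ τ)

lemma blockPerm_castAdd (σ : Equiv.Perm (Fin n)) (τ : Equiv.Perm (Fin m)) (i : Fin n) :
    blockPerm σ τ (Fin.castAdd m i) = Fin.castAdd m (σ i) := by
  simp [blockPerm, Equiv.permCongr_apply]

lemma blockPerm_natAdd (σ : Equiv.Perm (Fin n)) (τ : Equiv.Perm (Fin m)) (j : Fin m) :
    blockPerm σ τ (Fin.natAdd n j) = Fin.natAdd n (τ j) := by
  simp [blockPerm, Equiv.permCongr_apply]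

lemma blockPerm_apply_lt (σ : Equiv.Perm (Fin n)) (τ : Equiv.Perm (Fin m))
    (x : Fin (n + m)) (hx : x.val < n) :
    blockPerm σ τ x = Fin.castAdd m (σ ⟨x.val, hx⟩) := by
  have h0 : Fin.castAdd m (⟨x.val, hx⟩ : Fin n) = x := by ext; rfl
  exact (congrArg (blockPerm σ τ) h0.symm).trans (blockPerm_castAdd σ τ _)

lemma blockPerm_apply_ge (σ : Equiv.Perm (Fin n)) (τ : Equiv.Perm (Fin m))
    (x : Fin (n + m)) (hx : ¬ x.val < n) :
    blockPerm σ τ x = Fin.natAdd n (τ ⟨x.val - n, by omega⟩) := by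
  have h0 : Fin.natAdd n (⟨x.val - n, by omega⟩ : Fin m) = x := by
    ext; simp [Fin.natAdd]; omega
  exact (congrArg (blockPerm σ τ) h0.symm).trans (blockPerm_natAdd σ τ _)

/-- Merge `σ` and `τ` into a permutation of `Fin (n+m)`: the direct sum with
the values `n-1` and `n` (0-indexed) swapped. -/
def combinePerm (hn : 1 ≤ n) (hm : 1 ≤ m) (σ : Equiv.Perm (Fin n))
    (τ : Equiv.Perm (Fin m)) : Equiv.Perm (Fin (n + m)) :=
  Equiv.swap ⟨n - 1, by omega⟩ ⟨n, by omega⟩ * blockPerm σ τ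

lemma combinePerm_val_lt (hn : 1 ≤ n) (hm : 1 ≤ m) (σ : Equiv.Perm (Fin n))
    (τ : Equiv.Perm (Fin m)) (x : Fin (n + m)) (hx : x.val < n) :
    (combinePerm hn hm σ τ x).val =
      if (σ ⟨x.val, hx⟩).val = n - 1 then n else (σ ⟨x.val, hx⟩).val := by
  have h1 : combinePerm hn hm σ τ x
      = Equiv.swap ⟨n - 1, by omega⟩ ⟨n, by omega⟩ (blockPerm σ τ x) := rfl
  rw [h1, blockPerm_apply_lt σ τ x hx]
  have hlt : (σ ⟨x.val, hx⟩).val < n := (σ ⟨x.val, hx⟩).isLt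
  by_cases h : (σ ⟨x.val, hx⟩).val = n - 1
  · have he : Fin.castAdd m (σ ⟨x.val, hx⟩) = (⟨n - 1, by omega⟩ : Fin (n + m)) := by
      ext; simpa using h
    rw [he, Equiv.swap_apply_left, if_pos h]
  · have h2 : Fin.castAdd m (σ ⟨x.val, hx⟩) ≠ (⟨n - 1, by omega⟩ : Fin (n + m)) := by
      intro hc
      exact h (by simpa using congrArg Fin.val hc)
    have h3 : Fin.castAdd m (σ ⟨x.val, hx⟩) ≠ (⟨n, by omega⟩ : Fin (n + m)) := by
      intro hc
      have := congrArg Fin.val hc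
      simp at this; omega
    rw [Equiv.swap_apply_of_ne_of_ne h2 h3, if_neg h]
    rfl

lemma combinePerm_val_ge (hn : 1 ≤ n) (hm : 1 ≤ m) (σ : Equiv.Perm (Fin n))
    (τ : Equiv.Perm (Fin m)) (x : Fin (n + m)) (hx : ¬ x.val < n) :
    (combinePerm hn hm σ τ x).val =
      if (τ ⟨x.val - n, by omega⟩).val = 0 then n - 1
      else n + (τ ⟨x.val - n, by omega⟩).val := by
  have h1 : combinePerm hn hm σ τ x
      = Equiv.swap ⟨n - 1, by omega⟩ ⟨n, by omega⟩ (blockPerm σ τ x) := rfl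
  rw [h1, blockPerm_apply_ge σ τ x hx]
  by_cases h : (τ ⟨x.val - n, by omega⟩).val = 0
  · have he : Fin.natAdd n (τ ⟨x.val - n, by omega⟩) = (⟨n, by omega⟩ : Fin (n + m)) := by
      ext; simpa using h
    rw [he, Equiv.swap_apply_right, if_pos h]
  · have h2 : Fin.natAdd n (τ ⟨x.val - n, by omega⟩) ≠ (⟨n - 1, by omega⟩ : Fin (n + m)) := by
      intro hc
      have := congrArg Fin.val hc
      simp at this; omega
    have h3 : Fin.natAdd n (τ ⟨x.val - n, by omega⟩) ≠ (⟨n, by omega⟩ : Fin (n + m)) := by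
      intro hc
      have := congrArg Fin.val hc
      simp at this; omega
    rw [Equiv.swap_apply_of_ne_of_ne h2 h3, if_neg h]
    rfl

lemma combinePerm_avoids (hn : 1 ≤ n) (hm : 1 ≤ m) {σ : Equiv.Perm (Fin n)}
    {τ : Equiv.Perm (Fin m)} (hσ : Avoids321 σ) (hτ : Avoids321 τ) :
    Avoids321 (combinePerm hn hm σ τ) := by
  rintro ⟨i, j, k, hij, hjk, h1, h2⟩
  rw [Fin.lt_def] at hij hjk h1 h2
  by_cases hi : i.val < n <;> by_cases hj : j.val < n <;> by_cases hk : k.val < n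
  · -- all in first block
    rw [combinePerm_val_lt hn hm σ τ k hk, combinePerm_val_lt hn hm σ τ j hj] at h1
    rw [combinePerm_val_lt hn hm σ τ j hj, combinePerm_val_lt hn hm σ τ i hi] at h2
    have hsi := (σ ⟨i.val, hi⟩).isLt
    have hsj := (σ ⟨j.val, hj⟩).isLt
    have hsk := (σ ⟨k.val, hk⟩).isLt
    refine hσ ⟨⟨i.val, hi⟩, ⟨j.val, hj⟩, ⟨k.val, hk⟩, ?_, ?_, ?_, ?_⟩ <;>
      simp only [Fin.lt_def, Fin.mk_lt_mk] <;> split_ifs at h1 h2 <;> omega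
  · -- i, j in first block, k in second
    rw [combinePerm_val_ge hn hm σ τ k hk, combinePerm_val_lt hn hm σ τ j hj] at h1
    rw [combinePerm_val_lt hn hm σ τ j hj, combinePerm_val_lt hn hm σ τ i hi] at h2
    have hsi := (σ ⟨i.val, hi⟩).isLt
    have hsj := (σ ⟨j.val, hj⟩).isLt
    split_ifs at h1 h2 <;> omega
  · omega
  · -- i in first block, j, k in second
    rw [combinePerm_val_ge hn hm σ τ k hk, combinePerm_val_ge hn hm σ τ j hj] at h1
    rw [combinePerm_val_ge hn hm σ τ j hj, combinePerm_val_lt hn hm σ τ i hi] at h2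
    have hsi := (σ ⟨i.val, hi⟩).isLt
    split_ifs at h1 h2 <;> omega
  · omega
  · omega
  · omega
  · -- all in second block
    rw [combinePerm_val_ge hn hm σ τ k hk, combinePerm_val_ge hn hm σ τ j hj] at h1
    rw [combinePerm_val_ge hn hm σ τ j hj, combinePerm_val_ge hn hm σ τ i hi] at h2
    refine hτ ⟨⟨i.val - n, by omega⟩, ⟨j.val - n, by omega⟩, ⟨k.val - n, by omega⟩,
      ?_, ?_, ?_, ?_⟩ <;> simp only [Fin.lt_def, Fin.mk_lt_mk] <;> split_ifs at h1 h2 <;> omega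

lemma blockPerm_pow_castAdd (σ : Equiv.Perm (Fin n)) (τ : Equiv.Perm (Fin m))
    (k : ℕ) (i : Fin n) :
    ((blockPerm σ τ) ^ k) (Fin.castAdd m i) = Fin.castAdd m ((σ ^ k) i) := by
  induction k with
  | zero => simp
  | succ k ih =>
    rw [pow_succ', Equiv.Perm.mul_apply, ih, blockPerm_castAdd, ← Equiv.Perm.mul_apply,
      ← pow_succ']

lemma blockPerm_pow_natAdd (σ : Equiv.Perm (Fin n)) (τ : Equiv.Perm (Fin m))
    (k : ℕ) (j : Fin m) :
    ((blockPerm σ τ) ^ k) (Fin.natAdd n j) = Fin.natAdd n ((τ ^ k) j) := by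
  induction k with
  | zero => simp
  | succ k ih =>
    rw [pow_succ', Equiv.Perm.mul_apply, ih, blockPerm_natAdd, ← Equiv.Perm.mul_apply,
      ← pow_succ']

lemma combinePerm_cycle (hn : 1 ≤ n) (hm : 1 ≤ m) {σ : Equiv.Perm (Fin n)}
    {τ : Equiv.Perm (Fin m)} (hσc : ∀ x y : Fin n, σ.SameCycle x y)
    (hτc : ∀ x y : Fin m, τ.SameCycle x y) :
    ∀ x y : Fin (n + m), (combinePerm hn hm σ τ).SameCycle x y := by
  apply merge_sameCycle (blockPerm σ τ) ⟨n - 1, by omega⟩ ⟨n, by omega⟩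
    (fun x => x.val < n)
  · intro x
    by_cases hx : x.val < n
    · rw [blockPerm_apply_lt σ τ x hx]
      simp only [Fin.coe_castAdd]
      exact ⟨fun _ => hx, fun _ => (σ ⟨x.val, hx⟩).isLt⟩
    · rw [blockPerm_apply_ge σ τ x hx]
      simp only [Fin.coe_natAdd]
      constructor <;> intro h <;> omega
  · show n - 1 < n; omega
  · show ¬ n < n; omega
  · intro x hx
    have h := hσc ⟨n - 1, by omega⟩ ⟨x.val, hx⟩
    obtain ⟨z, _, hz⟩ := Equiv.Perm.SameCycle.exists_pow_eq' h
    refine ⟨(z : ℤ), ?_⟩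
    have hA : (⟨n - 1, by omega⟩ : Fin (n + m)) = Fin.castAdd m ⟨n - 1, by omega⟩ := by
      ext; rfl
    rw [zpow_natCast, hA, blockPerm_pow_castAdd, hz]
    ext; rfl
  · intro x hx
    have h := hτc ⟨0, by omega⟩ ⟨x.val - n, by omega⟩
    obtain ⟨z, _, hz⟩ := Equiv.Perm.SameCycle.exists_pow_eq' h
    refine ⟨(z : ℤ), ?_⟩
    have hB : (⟨n, by omega⟩ : Fin (n + m)) = Fin.natAdd n ⟨0, by omega⟩ := by
      ext; simp
    rw [zpow_natCast, hB, blockPerm_pow_natAdd, hz]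
    ext; simp [Fin.natAdd]; omega

/-- For all `n, m ≥ 1`, `c_n · c_m ≤ c_{n+m}`. -/
theorem c321_supermultiplicative (n m : ℕ) (hn : 1 ≤ n) (hm : 1 ≤ m) :
    c321 n * c321 m ≤ c321 (n + m) := by
  rw [c321, c321, c321, ← Nat.card_prod]
  refine Nat.card_le_card_of_injective
    (fun p => ⟨combinePerm hn hm p.1.1 p.2.1,
      combinePerm_cycle hn hm p.1.2.1 p.2.2.1,
      combinePerm_avoids hn hm p.1.2.2 p.2.2.2⟩) ?_
  rintro ⟨⟨σ₁, hσ₁⟩, ⟨τ₁, hτ₁⟩⟩ ⟨⟨σ₂, hσ₂⟩, ⟨τ₂, hτ₂⟩⟩ h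
  have h' : combinePerm hn hm σ₁ τ₁ = combinePerm hn hm σ₂ τ₂ :=
    congrArg Subtype.val h
  have hb : blockPerm σ₁ τ₁ = blockPerm σ₂ τ₂ :=
    mul_left_cancel h'
  have hσ : σ₁ = σ₂ := by
    ext i
    have := congrArg (fun f => (f (Fin.castAdd m i) : Fin (n + m)).val)
      (congrArg (fun e => e.toFun) hb)
    simpa [blockPerm_castAdd] using this
  have hτ : τ₁ = τ₂ := by
    ext j
    have := congrArg (fun f => (f (Fin.natAdd n j) : Fin (n + m)).val)
      (congrArg (fun e => e.toFun) hb)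
    simpa [blockPerm_natAdd] using this
  subst hσ; subst hτ; rfl
end

section
/- The limit lim_{n→∞} (c_n)^{1/n} exists, where c_n is the number of 321-avoiding n-cycles. -/
open Filter

open Equiv Equiv.Perm Finset

abbrev Good (k : ℕ) := {π : Equiv.Perm (Fin k) // (∀ x y : Fin k, π.SameCycle x y) ∧ Avoids321 π}

lemma avoids_finRotate (n : ℕ) : Avoids321 (finRotate n) := by
  rintro ⟨i, j, k, hij, hjk, h1, h2⟩
  match n, i, j, k with
  | n+1, i, j, k =>
  simp only [finRotate_succ_apply, Fin.lt_def] at hij hjk h1 h2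
  rw [Fin.val_add_one, Fin.val_add_one (i := j)] at h1
  rw [Fin.val_add_one, Fin.val_add_one (i := i)] at h2
  have hk := k.isLt
  have hj := j.isLt
  have hi := i.isLt
  split_ifs at h1 h2 <;> simp_all [Fin.ext_iff, Fin.val_last] <;> omega

lemma sameCycle_finRotate (n : ℕ) (x y : Fin n) : (finRotate n).SameCycle x y := by
  match n with
  | 0 => exact x.elim0
  | 1 => rw [Subsingleton.elim x y]
  | (n+2) =>
    refine isCycle_finRotate.sameCycle ?_ ?_ <;>
    · rw [finRotate_succ_apply]
      intro h
      have h2 : (1 : Fin (n+2)) = 0 := add_left_cancel (h.trans (add_zero _).symm)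
      simp [Fin.ext_iff] at h2

lemma good_nonempty (n : ℕ) : Nonempty (Good n) :=
  ⟨⟨finRotate n, sameCycle_finRotate n, avoids_finRotate n⟩⟩

lemma c321_pos (n : ℕ) : 0 < c321 n := by
  have := good_nonempty n
  exact Nat.card_pos

lemma c321_zero : c321 0 = 1 := by
  have : Subsingleton (Good 0) := ⟨fun a b => Subtype.ext (Subsingleton.elim _ _)⟩
  have := good_nonempty 0
  exact Nat.card_unique

section UB
variable {n : ℕ}

/-- positions of left-to-right maxima -/
def maxSet (π : Equiv.Perm (Fin n)) : Finset (Fin n) :=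
  univ.filter (fun i => ∀ j, j < i → π j < π i)

/-- values used before position i -/
def usedSet (π : Equiv.Perm (Fin n)) (i : Fin n) : Finset (Fin n) :=
  (univ.filter (· < i)).image π

lemma mem_used {π : Equiv.Perm (Fin n)} {i j : Fin n} (h : j < i) : π j ∈ usedSet π i :=
  Finset.mem_image.mpr ⟨j, Finset.mem_filter.mpr ⟨Finset.mem_univ _, h⟩, rfl⟩

lemma not_used_self (π : Equiv.Perm (Fin n)) (i : Fin n) : π i ∉ usedSet π i := by
  simp only [usedSet, mem_image, mem_filter, mem_univ, true_and]
  rintro ⟨j, hj, hje⟩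
  exact absurd (π.injective hje) (ne_of_lt hj)

/-- 321-avoidance: at a non-max position, the value is the min of unused values. -/
lemma le_of_not_max {π : Equiv.Perm (Fin n)} (hπ : Avoids321 π) {i : Fin n}
    (hi : i ∉ maxSet π) : ∀ v, v ∉ usedSet π i → π i ≤ v := by
  intro v hv
  by_contra hlt
  push_neg at hlt
  obtain ⟨j, hji, hj⟩ : ∃ j, j < i ∧ ¬ π j < π i := by
    simpa [maxSet] using hi
  have hj' : π i < π j := lt_of_le_of_ne (not_lt.mp hj) fun h => (ne_of_lt hji) (π.injective h.symm)
  obtain ⟨k, rfl⟩ : ∃ k, π k = v := ⟨π.symm v, π.apply_symm_apply v⟩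
  have hik : i < k := by
    rcases lt_trichotomy k i with h | h | h
    · exact absurd (mem_used h) hv
    · exact absurd (h ▸ hlt) (lt_irrefl _)
    · exact h
  exact hπ ⟨j, i, k, hji, hik, hlt, hj'⟩

/-- at an LR-max position, the value is the min of unused max-values. -/
lemma le_of_max {π : Equiv.Perm (Fin n)} {i : Fin n}
    (hi : i ∈ maxSet π) : ∀ v, v ∈ (maxSet π).image π → v ∉ usedSet π i → π i ≤ v := by
  intro v hv hvu
  obtain ⟨k, hk, rfl⟩ := mem_image.mp hv
  rcases lt_trichotomy k i with h | h | h
  · exact absurd (mem_used h) hvu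
  · exact h ▸ le_rfl
  · simp only [maxSet, mem_filter] at hk
    exact le_of_lt (hk.2 i h)

lemma avoids_ext {π π' : Equiv.Perm (Fin n)} (hπ : Avoids321 π) (hπ' : Avoids321 π')
    (hm : maxSet π = maxSet π') (hv : (maxSet π).image π = (maxSet π').image π') :
    π = π' := by
  have key : ∀ N : ℕ, ∀ i : Fin n, i.val = N → π i = π' i := by
    intro N
    induction N using Nat.strong_induction_on with
    | _ N ih =>
      intro i hiN
      have hused : usedSet π i = usedSet π' i := by
        unfold usedSet
        apply Finset.image_congr
        intro j hj
        simp only [coe_filter, Set.mem_setOf_eq] at hj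
        exact ih j.val (hiN ▸ hj.2) j rfl
      have h1 : π i ∉ usedSet π' i := hused ▸ not_used_self π i
      have h1' : π' i ∉ usedSet π i := hused ▸ not_used_self π' i
      by_cases hmax : i ∈ maxSet π
      · have hmax' : i ∈ maxSet π' := hm ▸ hmax
        refine le_antisymm (le_of_max hmax (π' i) ?_ h1') (le_of_max hmax' (π i) ?_ h1)
        · rw [hv]; exact mem_image_of_mem _ hmax'
        · rw [← hv]; exact mem_image_of_mem _ hmax
      · have hmax' : i ∉ maxSet π' := hm ▸ hmax
        exact le_antisymm (le_of_not_max hπ hmax (π' i) h1') (le_of_not_max hπ' hmax' (π i) h1)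
  exact Equiv.ext fun i => key i.val i rfl

lemma c321_le_four_pow (n : ℕ) : c321 n ≤ 4 ^ n := by
  have hinj : Function.Injective
      (fun π : Good n => ((maxSet π.1, (maxSet π.1).image π.1) : Finset (Fin n) × Finset (Fin n))) := by
    rintro ⟨π, _, hπ⟩ ⟨π', _, hπ'⟩ h
    simp only [Prod.mk.injEq] at h
    exact Subtype.ext (avoids_ext hπ hπ' h.1 h.2)
  calc c321 n ≤ Nat.card (Finset (Fin n) × Finset (Fin n)) :=
        Nat.card_le_card_of_injective _ hinj
    _ = 4 ^ n := by
        rw [Nat.card_eq_fintype_card, Fintype.card_prod, Fintype.card_finset, Fintype.card_fin,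
          ← mul_pow]
        norm_num

end UB

section Merge

variable {m n : ℕ}

lemma permCongr_mul {α β : Type*} (e : α ≃ β) (p q : Equiv.Perm α) :
    e.permCongr (p * q) = e.permCongr p * e.permCongr q := by
  ext x
  simp [Equiv.permCongr_apply, Equiv.Perm.mul_apply]

/-- direct sum of two permutations -/
def bp (σ : Equiv.Perm (Fin m)) (τ : Equiv.Perm (Fin n)) : Equiv.Perm (Fin (m + n)) :=
  finSumFinEquiv.permCongr (Equiv.Perm.sumCongrHom _ _ (σ, τ))

lemma bp_injective : Function.Injective
    (fun p : Equiv.Perm (Fin m) × Equiv.Perm (Fin n) => bp p.1 p.2) := by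
  intro p q h
  exact Equiv.Perm.sumCongrHom_injective (finSumFinEquiv.permCongr.injective h)

lemma bp_mul (σ σ' : Equiv.Perm (Fin m)) (τ τ' : Equiv.Perm (Fin n)) :
    bp σ τ * bp σ' τ' = bp (σ * σ') (τ * τ') := by
  unfold bp
  rw [← _root_.permCongr_mul, ← map_mul]
  rfl

lemma bp_one : (bp 1 1 : Equiv.Perm (Fin (m + n))) = 1 := by
  ext x
  simp [bp, Equiv.Perm.sumCongrHom]

lemma bp_pow (σ : Equiv.Perm (Fin m)) (τ : Equiv.Perm (Fin n)) (k : ℕ) :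
    (bp σ τ) ^ k = bp (σ ^ k) (τ ^ k) := by
  induction k with
  | zero => simpa using bp_one.symm
  | succ k ih => rw [pow_succ, ih, bp_mul, ← pow_succ, ← pow_succ]

lemma bp_apply_castAdd (σ : Equiv.Perm (Fin m)) (τ : Equiv.Perm (Fin n)) (x : Fin m) :
    bp σ τ (Fin.castAdd n x) = Fin.castAdd n (σ x) := by
  simp [bp, ← finSumFinEquiv_apply_left, finSumFinEquiv_symm_apply_castAdd,
    Equiv.Perm.sumCongrHom]

lemma bp_apply_natAdd (σ : Equiv.Perm (Fin m)) (τ : Equiv.Perm (Fin n)) (x : Fin n) :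
    bp σ τ (Fin.natAdd m x) = Fin.natAdd m (τ x) := by
  simp [bp, ← finSumFinEquiv_apply_right, finSumFinEquiv_symm_apply_natAdd,
    Equiv.Perm.sumCongrHom]

lemma bp_val_lt (σ : Equiv.Perm (Fin m)) (τ : Equiv.Perm (Fin n)) {x : Fin (m + n)}
    (hx : (x : ℕ) < m) : ((bp σ τ) x : ℕ) = σ ⟨x, hx⟩ := by
  obtain ⟨y, rfl⟩ : ∃ y : Fin m, x = Fin.castAdd n y := ⟨⟨x, hx⟩, Fin.ext rfl⟩
  rw [bp_apply_castAdd]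
  rfl

lemma bp_val_ge (σ : Equiv.Perm (Fin m)) (τ : Equiv.Perm (Fin n)) {x : Fin (m + n)}
    (hx : m ≤ (x : ℕ)) : ((bp σ τ) x : ℕ) = m + τ ⟨x - m, by have := x.isLt; omega⟩ := by
  obtain ⟨y, rfl⟩ : ∃ y : Fin n, x = Fin.natAdd m y := by
    refine ⟨⟨x - m, by have := x.isLt; omega⟩, Fin.ext ?_⟩
    simp [Fin.natAdd]
    omega
  rw [bp_apply_natAdd]
  simp only [Fin.natAdd]
  congr 2
  ext
  simp

lemma bp_block_lt (σ : Equiv.Perm (Fin m)) (τ : Equiv.Perm (Fin n)) {x : Fin (m + n)} :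
    ((bp σ τ x : ℕ) < m) ↔ (x : ℕ) < m := by
  constructor
  · intro h
    by_contra hx
    push_neg at hx
    rw [bp_val_ge σ τ hx] at h
    omega
  · intro h
    rw [bp_val_lt σ τ h]
    exact (σ _).isLt

end Merge

section Reach

variable {α : Type*} [DecidableEq α]

lemma sameCycle_swap_mul_of_reach (g : Equiv.Perm α) (u v x : α) (k : ℕ) (hk : 0 < k)
    (hgk : (g ^ k) x = u) (hmin : ∀ i, 0 < i → i < k → (g ^ i) x ≠ u ∧ (g ^ i) x ≠ v) :
    (Equiv.swap u v * g).SameCycle x v := by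
  set s := Equiv.swap u v with hs
  have key : ∀ j, j < k → ((s * g) ^ j) x = (g ^ j) x := by
    intro j hj
    induction j with
    | zero => simp
    | succ j ihj =>
      have hj' : j < k := by omega
      have e : ((s * g) ^ (j+1)) x = (s * g) ((g ^ j) x) := by
        rw [pow_succ', Equiv.Perm.mul_apply, ihj hj']
      have e2 : g ((g ^ j) x) = (g ^ (j+1)) x := by
        rw [pow_succ', Equiv.Perm.mul_apply]
      rw [e, Equiv.Perm.mul_apply, e2]
      obtain ⟨h1, h2⟩ := hmin (j + 1) (by omega) hj
      rw [hs, Equiv.swap_apply_of_ne_of_ne h1 h2]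
  refine ⟨(k : ℤ), ?_⟩
  rw [zpow_natCast]
  have hk1 : k - 1 < k := by omega
  have e1 : ((s * g) ^ k) x = (s * g) (((s * g) ^ (k - 1)) x) := by
    conv_lhs => rw [show k = (k-1) + 1 by omega, pow_succ']
    rw [Equiv.Perm.mul_apply]
  have e2 : g ((g ^ (k - 1)) x) = (g ^ k) x := by
    conv_rhs => rw [show k = (k-1) + 1 by omega, pow_succ']
    rw [Equiv.Perm.mul_apply]
  rw [e1, key _ hk1, Equiv.Perm.mul_apply, e2, hgk, hs, Equiv.swap_apply_left]

end Reach

section Merge2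

variable {m n : ℕ}

/-- merge an m-cycle and an n-cycle into an (m+n)-cycle -/
def mg (hm : 0 < m) (hn : 0 < n) (σ : Equiv.Perm (Fin m)) (τ : Equiv.Perm (Fin n)) :
    Equiv.Perm (Fin (m + n)) :=
  Equiv.swap (⟨m - 1, by omega⟩ : Fin (m + n)) (⟨m, by omega⟩ : Fin (m + n)) * bp σ τ

variable (hm : 0 < m) (hn : 0 < n) (σ : Equiv.Perm (Fin m)) (τ : Equiv.Perm (Fin n))

lemma mg_injective : Function.Injective
    (fun p : Equiv.Perm (Fin m) × Equiv.Perm (Fin n) => mg hm hn p.1 p.2) := by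
  intro p q h
  exact bp_injective (mul_left_cancel h)

-- value lemmas
lemma mg_val_lt_max {x : Fin (m + n)} (hx : (x : ℕ) < m)
    (h : ((σ ⟨x, hx⟩ : Fin m) : ℕ) = m - 1) : ((mg hm hn σ τ) x : ℕ) = m := by
  have hg : bp σ τ x = (⟨m - 1, by omega⟩ : Fin (m + n)) := by
    ext
    rw [bp_val_lt σ τ hx]
    exact h
  rw [mg, Equiv.Perm.mul_apply, hg, Equiv.swap_apply_left]

lemma mg_val_lt {x : Fin (m + n)} (hx : (x : ℕ) < m)
    (h : ((σ ⟨x, hx⟩ : Fin m) : ℕ) ≠ m - 1) : ((mg hm hn σ τ) x : ℕ) = σ ⟨x, hx⟩ := by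
  have h1 : bp σ τ x ≠ (⟨m - 1, by omega⟩ : Fin (m + n)) := by
    intro hc
    exact h (by rw [← bp_val_lt σ τ hx, hc])
  have h2 : bp σ τ x ≠ (⟨m, by omega⟩ : Fin (m + n)) := by
    intro hc
    have hval : ((bp σ τ) x : ℕ) = m := by rw [hc]
    rw [bp_val_lt σ τ hx] at hval
    have := (σ ⟨x, hx⟩).isLt
    omega
  rw [mg, Equiv.Perm.mul_apply, Equiv.swap_apply_of_ne_of_ne h1 h2, bp_val_lt σ τ hx]

lemma mg_val_ge_min {x : Fin (m + n)} (hx : m ≤ (x : ℕ))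
    (h : ((τ ⟨x - m, by have := x.isLt; omega⟩ : Fin n) : ℕ) = 0) :
    ((mg hm hn σ τ) x : ℕ) = m - 1 := by
  have hg : bp σ τ x = (⟨m, by omega⟩ : Fin (m + n)) := by
    ext
    rw [bp_val_ge σ τ hx, h]
    rfl
  rw [mg, Equiv.Perm.mul_apply, hg, Equiv.swap_apply_right]

lemma mg_val_ge {x : Fin (m + n)} (hx : m ≤ (x : ℕ))
    (h : ((τ ⟨x - m, by have := x.isLt; omega⟩ : Fin n) : ℕ) ≠ 0) :
    ((mg hm hn σ τ) x : ℕ) = m + τ ⟨x - m, by have := x.isLt; omega⟩ := by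
  have h1 : bp σ τ x ≠ (⟨m - 1, by omega⟩ : Fin (m + n)) := by
    intro hc
    have hval : ((bp σ τ) x : ℕ) = m - 1 := by rw [hc]
    rw [bp_val_ge σ τ hx] at hval
    omega
  have h2 : bp σ τ x ≠ (⟨m, by omega⟩ : Fin (m + n)) := by
    intro hc
    have hval : ((bp σ τ) x : ℕ) = m := by rw [hc]
    rw [bp_val_ge σ τ hx] at hval
    exact h (by omega)
  rw [mg, Equiv.Perm.mul_apply, Equiv.swap_apply_of_ne_of_ne h1 h2, bp_val_ge σ τ hx]

lemma mg_le_of_lt {x : Fin (m + n)} (hx : (x : ℕ) < m) : ((mg hm hn σ τ) x : ℕ) ≤ m := by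
  by_cases h : ((σ ⟨x, hx⟩ : Fin m) : ℕ) = m - 1
  · rw [mg_val_lt_max hm hn σ τ hx h]
  · rw [mg_val_lt hm hn σ τ hx h]
    have := (σ ⟨x, hx⟩).isLt
    omega

lemma mg_ge_of_ge {x : Fin (m + n)} (hx : m ≤ (x : ℕ)) :
    m - 1 ≤ ((mg hm hn σ τ) x : ℕ) := by
  by_cases h : ((τ ⟨x - m, by have := x.isLt; omega⟩ : Fin n) : ℕ) = 0
  · rw [mg_val_ge_min hm hn σ τ hx h]
  · rw [mg_val_ge hm hn σ τ hx h]
    omega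

lemma mg_avoids (hσ : Avoids321 σ) (hτ : Avoids321 τ) : Avoids321 (mg hm hn σ τ) := by
  rintro ⟨i, j, k, hij, hjk, h1, h2⟩
  rw [Fin.lt_def] at hij hjk h1 h2
  rcases lt_or_ge (j : ℕ) m with hjm | hjm
  · rcases lt_or_ge (k : ℕ) m with hkm | hkm
    · -- all three in block 1
      have him : (i : ℕ) < m := by omega
      -- j and k cannot map to the max
      have hjv : ((σ ⟨j, hjm⟩ : Fin m) : ℕ) ≠ m - 1 := by
        intro h
        have := mg_val_lt_max hm hn σ τ hjm h
        have := mg_le_of_lt hm hn σ τ him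
        omega
      have hkv : ((σ ⟨k, hkm⟩ : Fin m) : ℕ) ≠ m - 1 := by
        intro h
        have e := mg_val_lt_max hm hn σ τ hkm h
        have e2 := mg_le_of_lt hm hn σ τ hjm
        have e3 := mg_val_lt hm hn σ τ hjm hjv
        have := (σ ⟨j, hjm⟩).isLt
        omega
      have ej := mg_val_lt hm hn σ τ hjm hjv
      have ek := mg_val_lt hm hn σ τ hkm hkv
      by_cases hiv : ((σ ⟨i, him⟩ : Fin m) : ℕ) = m - 1
      · exact hσ ⟨⟨i, him⟩, ⟨j, hjm⟩, ⟨k, hkm⟩, hij, hjk, by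
          rw [Fin.lt_def]; omega, by
          rw [Fin.lt_def]
          have ei := mg_val_lt_max hm hn σ τ him hiv
          have := (σ ⟨j, hjm⟩).isLt
          omega⟩
      · have ei := mg_val_lt hm hn σ τ him hiv
        exact hσ ⟨⟨i, him⟩, ⟨j, hjm⟩, ⟨k, hkm⟩, hij, hjk, by rw [Fin.lt_def]; omega,
          by rw [Fin.lt_def]; omega⟩
    · -- i, j in block 1, k in block 2
      have him : (i : ℕ) < m := by omega
      have e1 := mg_ge_of_ge hm hn σ τ hkm
      have e2 := mg_le_of_lt hm hn σ τ him
      have e3 := mg_le_of_lt hm hn σ τ hjm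
      -- π j > π k ≥ m - 1 and π j ≤ m so π j = m, so σ j = m-1... then π i > m
      by_cases hjv : ((σ ⟨j, hjm⟩ : Fin m) : ℕ) = m - 1
      · have := mg_val_lt_max hm hn σ τ hjm hjv
        omega
      · have := mg_val_lt hm hn σ τ hjm hjv
        have := (σ ⟨j, hjm⟩).isLt
        omega
  · -- j, k in block 2
    have hkm : m ≤ (k : ℕ) := by omega
    rcases lt_or_ge (i : ℕ) m with him | him
    · -- i in block 1
      have e1 := mg_le_of_lt hm hn σ τ him
      have e2 := mg_ge_of_ge hm hn σ τ hjm
      have e3 := mg_ge_of_ge hm hn σ τ hkm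
      -- π j < π i ≤ m hence π j ≤ m - 1 hence π j = m - 1, and π k < m - 1: contra
      omega
    · -- all in block 2
      have hjb : ((τ ⟨j - m, by have := j.isLt; omega⟩ : Fin n) : ℕ) ≠ 0 := by
        intro h
        have := mg_val_ge_min hm hn σ τ hjm h
        have := mg_ge_of_ge hm hn σ τ hkm
        omega
      have hib : ((τ ⟨i - m, by have := i.isLt; omega⟩ : Fin n) : ℕ) ≠ 0 := by
        intro h
        have := mg_val_ge_min hm hn σ τ him h
        have e2 := mg_ge_of_ge hm hn σ τ hjm
        have e3 := mg_val_ge hm hn σ τ hjm hjb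
        omega
      have ei := mg_val_ge hm hn σ τ him hib
      have ej := mg_val_ge hm hn σ τ hjm hjb
      by_cases hkb : ((τ ⟨k - m, by have := k.isLt; omega⟩ : Fin n) : ℕ) = 0
      · -- use triple (i', j', k'=b) in τ
        have ek := mg_val_ge_min hm hn σ τ hkm hkb
        exact hτ ⟨⟨i - m, by have := i.isLt; omega⟩, ⟨j - m, by have := j.isLt; omega⟩,
          ⟨k - m, by have := k.isLt; omega⟩, by rw [Fin.lt_def]; simp; omega,
          by rw [Fin.lt_def]; simp; omega, by rw [Fin.lt_def]; omega,
          by rw [Fin.lt_def]; omega⟩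
      · have ek := mg_val_ge hm hn σ τ hkm hkb
        exact hτ ⟨⟨i - m, by have := i.isLt; omega⟩, ⟨j - m, by have := j.isLt; omega⟩,
          ⟨k - m, by have := k.isLt; omega⟩, by rw [Fin.lt_def]; simp; omega,
          by rw [Fin.lt_def]; simp; omega, by rw [Fin.lt_def]; omega,
          by rw [Fin.lt_def]; omega⟩

lemma mg_sameCycle (hσ : ∀ x y, σ.SameCycle x y) (hτ : ∀ x y, τ.SameCycle x y) :
    ∀ x y : Fin (m + n), (mg hm hn σ τ).SameCycle x y := by
  set u : Fin (m + n) := ⟨m - 1, by omega⟩ with hu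
  set v : Fin (m + n) := ⟨m, by omega⟩ with hv
  set g := bp σ τ with hg
  -- block-1 elements reach v
  have C1 : ∀ x : Fin (m + n), (x : ℕ) < m → (mg hm hn σ τ).SameCycle x v := by
    intro x hx
    have hex : ∃ k, 0 < k ∧ (g ^ k) x = u := by
      obtain ⟨k, hk0, _, hk⟩ := (hσ ⟨x, hx⟩ ⟨m - 1, by omega⟩).exists_pow_eq''
      refine ⟨k, hk0, ?_⟩
      ext
      rw [hg, bp_pow, bp_val_lt _ _ hx, hk]
    classical
    let k₀ := Nat.find hex
    obtain ⟨hk₀pos, hk₀⟩ : 0 < Nat.find hex ∧ (g ^ Nat.find hex) x = u := Nat.find_spec hex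
    refine sameCycle_swap_mul_of_reach g u v x (Nat.find hex) hk₀pos hk₀ ?_
    intro i hi0 hik
    constructor
    · intro hc
      exact Nat.find_min hex hik ⟨hi0, hc⟩
    · intro hc
      have hlt : ((g ^ i) x : ℕ) < m := by
        rw [hg, bp_pow]
        exact (bp_block_lt _ _).mpr hx
      rw [hc] at hlt
      have hvv : ((v : Fin (m + n)) : ℕ) = m := rfl
      omega
  -- block-2 elements reach u
  have C2 : ∀ x : Fin (m + n), m ≤ (x : ℕ) → (mg hm hn σ τ).SameCycle x u := by
    intro x hx
    have hex : ∃ k, 0 < k ∧ (g ^ k) x = v := by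
      obtain ⟨k, hk0, _, hk⟩ := (hτ ⟨x - m, by have := x.isLt; omega⟩ ⟨0, hn⟩).exists_pow_eq''
      refine ⟨k, hk0, ?_⟩
      ext
      rw [hg, bp_pow, bp_val_ge _ _ hx]
      have : ((τ ^ k) ⟨x - m, by have := x.isLt; omega⟩ : ℕ) = 0 := by rw [hk]
      rw [this]
      simp [hv]
    classical
    obtain ⟨hk₀pos, hk₀⟩ : 0 < Nat.find hex ∧ (g ^ Nat.find hex) x = v := Nat.find_spec hex
    have := sameCycle_swap_mul_of_reach g v u x (Nat.find hex) hk₀pos hk₀ ?_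
    · rw [Equiv.swap_comm] at this
      exact this
    intro i hi0 hik
    constructor
    · intro hc
      exact Nat.find_min hex hik ⟨hi0, hc⟩
    · intro hc
      have hge : m ≤ ((g ^ i) x : ℕ) := by
        rw [hg, bp_pow]
        by_contra hcon
        push_neg at hcon
        have := (bp_block_lt (σ ^ i) (τ ^ i)).mp hcon
        omega
      rw [hc] at hge
      have huu : ((u : Fin (m + n)) : ℕ) = m - 1 := rfl
      omega
  have hall : ∀ x : Fin (m + n), (mg hm hn σ τ).SameCycle x v := by
    intro x
    rcases lt_or_ge (x : ℕ) m with hx | hx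
    · exact C1 x hx
    · exact (C2 x hx).trans (C1 u (show m - 1 < m by omega))
  intro x y
  exact (hall x).trans (hall y).symm

end Merge2

lemma c321_supermul (m n : ℕ) : c321 m * c321 n ≤ c321 (m + n) := by
  rcases Nat.eq_zero_or_pos m with rfl | hm
  · rw [c321_zero, one_mul, zero_add]
  rcases Nat.eq_zero_or_pos n with rfl | hn
  · rw [c321_zero, mul_one, add_zero]
  have hinj : Function.Injective (fun p : Good m × Good n =>
      (⟨mg hm hn p.1.1 p.2.1,
        mg_sameCycle hm hn p.1.1 p.2.1 p.1.2.1 p.2.2.1,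
        mg_avoids hm hn p.1.1 p.2.1 p.1.2.2 p.2.2.2⟩ : Good (m + n))) := by
    rintro ⟨⟨σ, hσ⟩, ⟨τ, hτ⟩⟩ ⟨⟨σ', hσ'⟩, ⟨τ', hτ'⟩⟩ h
    simp only [Subtype.mk.injEq] at h
    have := mg_injective hm hn (a₁ := (σ, τ)) (a₂ := (σ', τ')) h
    simp only [Prod.mk.injEq] at this
    simp only [Prod.mk.injEq, Subtype.mk.injEq]
    exact this
  calc c321 m * c321 n = Nat.card (Good m × Good n) := (Nat.card_prod _ _).symm
    _ ≤ c321 (m + n) := Nat.card_le_card_of_injective _ hinj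

/-- The limit `lim_{n→∞} (c_n)^{1/n}` exists. -/
theorem c321_growth_rate_exists :
    ∃ L : ℝ, Tendsto (fun n : ℕ => (c321 n : ℝ) ^ ((1 : ℝ) / n)) atTop (nhds L) := by
  set u : ℕ → ℝ := fun n => -Real.log (c321 n) with hu
  have hcpos : ∀ k : ℕ, (0 : ℝ) < c321 k := fun k => by exact_mod_cast c321_pos k
  have hsub : Subadditive u := by
    intro a b
    show -Real.log (c321 (a + b)) ≤ -Real.log (c321 a) + -Real.log (c321 b)
    rw [← neg_add, neg_le_neg_iff, ← Real.log_mul (hcpos a).ne' (hcpos b).ne', ← Nat.cast_mul]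
    exact Real.log_le_log (by exact_mod_cast Nat.mul_pos (c321_pos a) (c321_pos b))
      (by exact_mod_cast c321_supermul a b)
  have hbdd : BddBelow (Set.range fun n : ℕ => u n / n) := by
    refine ⟨-Real.log 4, ?_⟩
    rintro x ⟨k, rfl⟩
    rcases Nat.eq_zero_or_pos k with rfl | hk
    · simp [hu]
      positivity
    · have h1 : Real.log (c321 k) ≤ k * Real.log 4 := by
        calc Real.log (c321 k) ≤ Real.log ((4 : ℝ) ^ k) :=
              Real.log_le_log (hcpos k) (by exact_mod_cast c321_le_four_pow k)
          _ = k * Real.log 4 := Real.log_pow (4 : ℝ) k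
      have hk' : (0 : ℝ) < k := by exact_mod_cast hk
      rw [hu]
      simp only
      rw [neg_div, neg_le_neg_iff, div_le_iff₀ hk']
      linarith [h1]
  refine ⟨Real.exp (-hsub.lim), ?_⟩
  have hlim : Tendsto (fun k : ℕ => Real.exp (-(u k / k))) atTop (nhds (Real.exp (-hsub.lim))) :=
    (Real.continuous_exp.tendsto _).comp (hsub.tendsto_lim hbdd).neg
  refine hlim.congr' ?_
  filter_upwards [eventually_ge_atTop 1] with k hk
  have hk' : (0 : ℝ) < k := by exact_mod_cast hk
  rw [Real.rpow_def_of_pos (hcpos k), hu]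
  simp only
  rw [neg_div, neg_neg, mul_one_div]
end

section
/- For n ≥ 2, the number of 321-avoiding n-cycles satisfies c_n ≥ 2^{n−2}. -/
namespace C321Proof

variable {m : ℕ}

/-- The list enumerating `Fin (m+2)`: elements of `E` increasing, then elements of `Eᶜ`
decreasing. -/
def lst (E : Finset (Fin (m + 2))) : List (Fin (m + 2)) :=
  E.sort (· ≤ ·) ++ (Eᶜ.sort (· ≤ ·)).reverse

lemma nodup_lst (E : Finset (Fin (m + 2))) : (lst E).Nodup := by
  refine List.Nodup.append (E.sort_nodup _) (List.nodup_reverse.2 (Eᶜ.sort_nodup _)) ?_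
  intro x hx hx'
  rw [Finset.mem_sort] at hx
  rw [List.mem_reverse, Finset.mem_sort, Finset.mem_compl] at hx'
  exact hx' hx

lemma mem_lst (E : Finset (Fin (m + 2))) (x : Fin (m + 2)) : x ∈ lst E := by
  by_cases hx : x ∈ E <;>
    simp [lst, List.mem_append, List.mem_reverse, Finset.mem_sort, Finset.mem_compl, hx]

lemma length_lst (E : Finset (Fin (m + 2))) : (lst E).length = m + 2 := by
  simp only [lst, List.length_append, List.length_reverse, Finset.length_sort]
  rw [Finset.card_add_card_compl, Fintype.card_fin]

/-- membership in `E` according to position in `lst E`. -/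
lemma mem_E_iff (E : Finset (Fin (m + 2))) {i : ℕ} (hi : i < (lst E).length) :
    (lst E)[i] ∈ E ↔ i < E.card := by
  have hs : (E.sort (· ≤ ·)).length = E.card := Finset.length_sort _
  have hi' : i < (E.sort (· ≤ ·)).length + ((Eᶜ.sort (· ≤ ·)).reverse).length := by
    simpa [lst, List.length_append] using hi
  by_cases h : i < E.card
  · simp only [lst]
    rw [List.getElem_append_left (by omega)]
    have hmem : (E.sort (· ≤ ·))[i]'(by omega) ∈ E := by
      rw [← Finset.mem_sort (α := Fin (m + 2)) (· ≤ ·)]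
      exact List.getElem_mem _
    exact iff_of_true hmem h
  · simp only [lst]
    rw [List.getElem_append_right (by omega)]
    have hmem : ((Eᶜ.sort (· ≤ ·)).reverse)[i - (E.sort (· ≤ ·)).length]'(by omega) ∈ Eᶜ := by
      rw [← Finset.mem_sort (α := Fin (m + 2)) (· ≤ ·), ← List.mem_reverse]
      exact List.getElem_mem _
    rw [Finset.mem_compl] at hmem
    exact iff_of_false hmem h

/-- strictly increasing on the first block. -/
lemma lt_first (E : Finset (Fin (m + 2))) {i j : ℕ} (hij : i < j) (hj : j < E.card)
    (hi' : i < (lst E).length) (hj' : j < (lst E).length) : (lst E)[i] < (lst E)[j] := by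
  have hs : (E.sort (· ≤ ·)).length = E.card := Finset.length_sort _
  simp only [lst]
  rw [List.getElem_append_left (by omega), List.getElem_append_left (by omega)]
  have := (Finset.sortedLT_sort E).pairwise.rel_get_of_lt
    (a := ⟨i, by omega⟩) (b := ⟨j, by omega⟩) (by simpa using hij)
  simpa using this

/-- strictly decreasing on the second block. -/
lemma lt_second (E : Finset (Fin (m + 2))) {i j : ℕ} (hki : E.card ≤ i) (hij : i < j)
    (hj' : j < (lst E).length) : (lst E)[j] < (lst E)[i]'(by omega) := by
  have hs : (E.sort (· ≤ ·)).length = E.card := Finset.length_sort _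
  have hrev : ((Eᶜ.sort (· ≤ ·)).reverse).Pairwise (· > ·) := by
    rw [List.pairwise_reverse]
    exact (Finset.sortedLT_sort Eᶜ).pairwise
  simp only [lst]
  rw [List.getElem_append_right (by omega), List.getElem_append_right (by omega)]
  have hjlen : j - (E.sort (· ≤ ·)).length < ((Eᶜ.sort (· ≤ ·)).reverse).length := by
    simp only [lst, List.length_append] at hj'; omega
  have := hrev.rel_get_of_lt
    (a := ⟨i - (E.sort (· ≤ ·)).length, by omega⟩)
    (b := ⟨j - (E.sort (· ≤ ·)).length, hjlen⟩) (by simp; omega)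
  simpa using this

lemma card_lt (E : Finset (Fin (m + 2))) (htop : Fin.last (m + 1) ∉ E) : E.card < m + 2 := by
  by_contra h
  push_neg at h
  have : E.card = Fintype.card (Fin (m + 2)) :=
    le_antisymm (by simpa using E.card_le_univ) (by simpa using h)
  rw [Finset.card_eq_iff_eq_univ] at this
  exact htop (this ▸ Finset.mem_univ _)

/-- the element at position `E.card` is the top element. -/
lemma getElem_card (E : Finset (Fin (m + 2))) (htop : Fin.last (m + 1) ∉ E) :
    (lst E)[E.card]'(by rw [length_lst]; exact card_lt E htop) = Fin.last (m + 1) := by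
  obtain ⟨i, hi, hieq⟩ := List.mem_iff_getElem.1 (mem_lst E (Fin.last (m + 1)))
  have hik : ¬ i < E.card := fun h => htop (hieq ▸ (mem_E_iff E hi).2 h)
  rcases Nat.lt_or_ge E.card i with h | h
  · exfalso
    have hlt := lt_second E (le_refl _) h hi
    rw [hieq] at hlt
    exact absurd ((lst E)[E.card]'(by rw [length_lst]; exact card_lt E htop)).le_last
      (not_le.2 hlt)
  · have : i = E.card := by omega
    subst this; exact hieq

/-- the element at position `0` is `0`. -/
lemma getElem_zero (E : Finset (Fin (m + 2))) (h0 : (0 : Fin (m + 2)) ∈ E) :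
    (lst E)[0]'(by rw [length_lst]; omega) = 0 := by
  obtain ⟨i, hi, hieq⟩ := List.mem_iff_getElem.1 (mem_lst E 0)
  have hik : i < E.card := (mem_E_iff E hi).1 (hieq ▸ h0)
  rcases Nat.eq_zero_or_pos i with h | h
  · subst h; exact hieq
  · exfalso
    have hlt := lt_first E h hik (by rw [length_lst]; omega) hi
    rw [hieq] at hlt
    exact absurd hlt (Fin.not_lt_zero _)

/-- the permutation associated to `E`. -/
def pe (E : Finset (Fin (m + 2))) : Equiv.Perm (Fin (m + 2)) := (lst E).formPerm

lemma pe_getElem (E : Finset (Fin (m + 2))) {i : ℕ} (hi : i + 1 < (lst E).length) :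
    pe E ((lst E)[i]'(by omega)) = (lst E)[i + 1] :=
  List.formPerm_apply_lt_getElem _ (nodup_lst E) i hi

lemma pe_getElem_last (E : Finset (Fin (m + 2))) :
    pe E ((lst E)[m + 1]'(by rw [length_lst]; omega)) =
      (lst E)[0]'(by rw [length_lst]; omega) := by
  have h := List.formPerm_apply_getElem (lst E) (nodup_lst E) (m + 1)
    (by rw [length_lst]; omega)
  have h2 : (m + 1 + 1) % (lst E).length = 0 := by
    rw [length_lst]; exact Nat.mod_self _
  rw [pe, h]
  simp only [h2]

/-- excedance characterization. -/
lemma exced (E : Finset (Fin (m + 2))) (h0 : (0 : Fin (m + 2)) ∈ E)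
    (htop : Fin.last (m + 1) ∉ E) (x : Fin (m + 2)) :
    (x ∈ E → x < pe E x) ∧ (x ∉ E → pe E x < x) := by
  obtain ⟨i, hi, rfl⟩ := List.mem_iff_getElem.1 (mem_lst E x)
  have hlen : (lst E).length = m + 2 := length_lst E
  have hk : E.card < m + 2 := card_lt E htop
  constructor
  · intro hx
    have hik : i < E.card := (mem_E_iff E hi).1 hx
    have hi1 : i + 1 < (lst E).length := by omega
    rw [pe_getElem E hi1]
    rcases Nat.lt_or_ge (i + 1) E.card with h | h
    · exact lt_first E (Nat.lt_succ_self i) h hi hi1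
    · have htopEq : (lst E)[i + 1] = Fin.last (m + 1) := by
        rw [← getElem_card E htop]
        congr 1
        omega
      rw [htopEq]
      exact lt_of_le_of_ne (Fin.le_last _) (fun h' => htop (h' ▸ hx))
  · intro hx
    have hik : ¬ i < E.card := fun h => hx ((mem_E_iff E hi).2 h)
    rcases Nat.lt_or_ge (i + 1) (lst E).length with h | h
    · rw [pe_getElem E h]
      exact lt_second E (by omega) (Nat.lt_succ_self i) h
    · have hieq : i = m + 1 := by omega
      subst hieq
      rw [pe_getElem_last E, getElem_zero E h0]
      refine Fin.pos_of_ne_zero (fun hz => hx ?_)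
      rw [hz]; exact h0

lemma getElem_ne_zero (E : Finset (Fin (m + 2))) (h0 : (0 : Fin (m + 2)) ∈ E) {j : ℕ}
    (hj : j < (lst E).length) (hjne : j ≠ 0) : (lst E)[j] ≠ 0 := by
  intro hz
  have h0' : (lst E)[0]'(by rw [length_lst]; omega) = 0 := getElem_zero E h0
  have := (nodup_lst E).getElem_inj_iff.1 (hz.trans h0'.symm)
  exact hjne this

/-- monotonicity on each class. -/
lemma mono_class (E : Finset (Fin (m + 2))) (h0 : (0 : Fin (m + 2)) ∈ E)
    (htop : Fin.last (m + 1) ∉ E) {x y : Fin (m + 2)} (hxy : x < y)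
    (hcls : (x ∈ E ∧ y ∈ E) ∨ (x ∉ E ∧ y ∉ E)) : pe E x < pe E y := by
  obtain ⟨i, hi, rfl⟩ := List.mem_iff_getElem.1 (mem_lst E x)
  obtain ⟨j, hj, rfl⟩ := List.mem_iff_getElem.1 (mem_lst E y)
  have hlen : (lst E).length = m + 2 := length_lst E
  have hk : E.card < m + 2 := card_lt E htop
  rcases hcls with ⟨hx, hy⟩ | ⟨hx, hy⟩
  · have hik : i < E.card := (mem_E_iff E hi).1 hx
    have hjk : j < E.card := (mem_E_iff E hj).1 hy
    have hij : i < j := by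
      rcases Nat.lt_trichotomy i j with h | h | h
      · exact h
      · subst h; exact absurd hxy (lt_irrefl _)
      · exact absurd (lt_first E h hik hj hi) (not_lt.2 hxy.le)
    have hj1 : j + 1 < (lst E).length := by omega
    have hi1 : i + 1 < (lst E).length := by omega
    rw [pe_getElem E hi1, pe_getElem E hj1]
    rcases Nat.lt_or_ge (j + 1) E.card with h | h
    · exact lt_first E (by omega) h hi1 hj1
    · have htopEq : (lst E)[j + 1] = Fin.last (m + 1) := by
        rw [← getElem_card E htop]; congr 1; omega
      rw [htopEq]
      refine lt_of_le_of_ne (Fin.le_last _) (fun h' => htop ?_)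
      exact h' ▸ (mem_E_iff E hi1).2 (by omega)
  · have hik : ¬ i < E.card := fun h => hx ((mem_E_iff E hi).2 h)
    have hjk : ¬ j < E.card := fun h => hy ((mem_E_iff E hj).2 h)
    have hij : j < i := by
      rcases Nat.lt_trichotomy i j with h | h | h
      · exact absurd (lt_second E (by omega) h hj) (not_lt.2 hxy.le)
      · subst h; exact absurd hxy (lt_irrefl _)
      · exact h
    have hj1 : j + 1 < (lst E).length := by omega
    rw [pe_getElem E hj1]
    rcases Nat.lt_or_ge (i + 1) (lst E).length with h | h
    · rw [pe_getElem E h]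
      exact lt_second E (by omega) (by omega) h
    · have hieq : i = m + 1 := by omega
      subst hieq
      rw [pe_getElem_last E, getElem_zero E h0]
      exact Fin.pos_of_ne_zero (getElem_ne_zero E h0 hj1 (by omega))

lemma avoids (E : Finset (Fin (m + 2))) (h0 : (0 : Fin (m + 2)) ∈ E)
    (htop : Fin.last (m + 1) ∉ E) : Avoids321 (pe E) := by
  rintro ⟨i, j, k, hij, hjk, h1, h2⟩
  by_cases hi : i ∈ E <;> by_cases hj : j ∈ E <;> by_cases hk : k ∈ E
  · exact absurd (mono_class E h0 htop hij (Or.inl ⟨hi, hj⟩)) (not_lt.2 h2.le)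
  · exact absurd (mono_class E h0 htop hij (Or.inl ⟨hi, hj⟩)) (not_lt.2 h2.le)
  · exact absurd (mono_class E h0 htop (hij.trans hjk) (Or.inl ⟨hi, hk⟩))
      (not_lt.2 (h1.trans h2).le)
  · exact absurd (mono_class E h0 htop hjk (Or.inr ⟨hj, hk⟩)) (not_lt.2 h1.le)
  · exact absurd (mono_class E h0 htop hjk (Or.inl ⟨hj, hk⟩)) (not_lt.2 h1.le)
  · exact absurd (mono_class E h0 htop (hij.trans hjk) (Or.inr ⟨hi, hk⟩))
      (not_lt.2 (h1.trans h2).le)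
  · exact absurd (mono_class E h0 htop hij (Or.inr ⟨hi, hj⟩)) (not_lt.2 h2.le)
  · exact absurd (mono_class E h0 htop hij (Or.inr ⟨hi, hj⟩)) (not_lt.2 h2.le)

lemma sameCycle (E : Finset (Fin (m + 2))) (x y : Fin (m + 2)) : (pe E).SameCycle x y := by
  have hlen : 2 ≤ (lst E).length := by rw [length_lst]; omega
  have hc : (pe E).IsCycle := List.isCycle_formPerm (nodup_lst E) hlen
  exact hc.sameCycle
    ((List.formPerm_apply_mem_ne_self_iff _ (nodup_lst E) x (mem_lst E x)).2 hlen)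
    ((List.formPerm_apply_mem_ne_self_iff _ (nodup_lst E) y (mem_lst E y)).2 hlen)

/-- the embedding `Fin m ↪ Fin (m+2)`, `i ↦ i+1`. -/
def emb : Fin m ↪ Fin (m + 2) :=
  ⟨fun i => ⟨i.val + 1, by omega⟩, fun a b h => by
    apply Fin.ext
    have := congrArg Fin.val h
    simpa using this⟩

/-- the excedance set associated to `A`. -/
def eset (A : Finset (Fin m)) : Finset (Fin (m + 2)) := insert 0 (A.map emb)

lemma zero_mem_eset (A : Finset (Fin m)) : (0 : Fin (m + 2)) ∈ eset A :=
  Finset.mem_insert_self _ _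

lemma top_not_mem_eset (A : Finset (Fin m)) : Fin.last (m + 1) ∉ eset A := by
  simp only [eset, Finset.mem_insert, Finset.mem_map]
  rintro (h | ⟨a, _, h⟩)
  · have := congrArg Fin.val h
    simp [Fin.last] at this
  · have := congrArg Fin.val h
    change (a : ℕ) + 1 = m + 1 at this
    omega

lemma emb_mem_eset_iff (A : Finset (Fin m)) (a : Fin m) : emb a ∈ eset A ↔ a ∈ A := by
  simp only [eset, Finset.mem_insert, Finset.mem_map]
  constructor
  · rintro (h | ⟨b, hb, h⟩)
    · exfalso
      have := congrArg Fin.val h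
      change (a : ℕ) + 1 = 0 at this
      omega
    · rwa [← emb.injective h]
  · intro h
    exact Or.inr ⟨a, h, rfl⟩

theorem key (m : ℕ) : 2 ^ m ≤ c321 (m + 2) := by
  classical
  set F : Finset (Fin m) →
      {π : Equiv.Perm (Fin (m + 2)) // (∀ x y : Fin (m + 2), π.SameCycle x y) ∧ Avoids321 π} :=
    fun A => ⟨pe (eset A), sameCycle (eset A),
      avoids (eset A) (zero_mem_eset A) (top_not_mem_eset A)⟩ with hF
  have hinj : Function.Injective F := by
    intro A B h
    have hpe : pe (eset A) = pe (eset B) := congrArg Subtype.val h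
    have heset : eset A = eset B := by
      ext x
      constructor
      · intro hx
        by_contra hx'
        have h1 := (exced (eset A) (zero_mem_eset A) (top_not_mem_eset A) x).1 hx
        have h2 := (exced (eset B) (zero_mem_eset B) (top_not_mem_eset B) x).2 hx'
        rw [← hpe] at h2
        exact absurd h1 (not_lt.2 h2.le)
      · intro hx
        by_contra hx'
        have h1 := (exced (eset B) (zero_mem_eset B) (top_not_mem_eset B) x).1 hx
        have h2 := (exced (eset A) (zero_mem_eset A) (top_not_mem_eset A) x).2 hx'
        rw [hpe] at h2
        exact absurd h1 (not_lt.2 h2.le)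
    ext a
    rw [← emb_mem_eset_iff A a, ← emb_mem_eset_iff B a, heset]
  calc 2 ^ m = Nat.card (Finset (Fin m)) := by
        simp [Nat.card_eq_fintype_card]
    _ ≤ c321 (m + 2) := Nat.card_le_card_of_injective F hinj

end C321Proof

/-- For `n ≥ 2`, `c_n ≥ 2^{n−2}`. -/
theorem c321_lower_bound (n : ℕ) (hn : 2 ≤ n) : 2 ^ (n - 2) ≤ c321 n := by
  obtain ⟨m, rfl⟩ : ∃ m, n = m + 2 := ⟨n - 2, by omega⟩
  simpa using C321Proof.key m
end

section
/- Every permutation π ∈ S_n of one-line form π = π_1…π_{k−1} 1 π_{k+1}…π_n with π_1 > π_2 > … > π_{k−1} > 1 and π_{k+1} < π_{k+2} < … < π_n avoids the vincular patterns ⟨32⟩⟨41⟩, ⟨14⟩⟨23⟩, ⟨41⟩⟨32⟩, ⟨23⟩⟨14⟩, ⟨23⟩·⟨1⟩(final), and ⟨1⟩(initial)·⟨32⟩. -/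
/-- Occurrence of the vincular pattern ⟨32⟩⟨41⟩: two disjoint adjacent pairs, in this
order, order-isomorphic to 3241. -/
def P3241 {n : ℕ} (π : Equiv.Perm (Fin n)) : Prop :=
  ∃ i i' j j' : Fin n, (i' : ℕ) = (i : ℕ) + 1 ∧ (j' : ℕ) = (j : ℕ) + 1 ∧
    (i' : ℕ) < (j : ℕ) ∧ π j' < π i' ∧ π i' < π i ∧ π i < π j

/-- Occurrence of the vincular pattern ⟨14⟩⟨23⟩. -/
def P1423 {n : ℕ} (π : Equiv.Perm (Fin n)) : Prop :=
  ∃ i i' j j' : Fin n, (i' : ℕ) = (i : ℕ) + 1 ∧ (j' : ℕ) = (j : ℕ) + 1 ∧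
    (i' : ℕ) < (j : ℕ) ∧ π i < π j ∧ π j < π j' ∧ π j' < π i'

/-- Occurrence of the vincular pattern ⟨41⟩⟨32⟩. -/
def P4132 {n : ℕ} (π : Equiv.Perm (Fin n)) : Prop :=
  ∃ i i' j j' : Fin n, (i' : ℕ) = (i : ℕ) + 1 ∧ (j' : ℕ) = (j : ℕ) + 1 ∧
    (i' : ℕ) < (j : ℕ) ∧ π i' < π j' ∧ π j' < π j ∧ π j < π i

/-- Occurrence of the vincular pattern ⟨23⟩⟨14⟩. -/
def P2314 {n : ℕ} (π : Equiv.Perm (Fin n)) : Prop :=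
  ∃ i i' j j' : Fin n, (i' : ℕ) = (i : ℕ) + 1 ∧ (j' : ℕ) = (j : ℕ) + 1 ∧
    (i' : ℕ) < (j : ℕ) ∧ π j < π i ∧ π i < π i' ∧ π i' < π j'

/-- Occurrence of the vincular pattern ⟨23⟩⟨1⟩ where the `1` must be the final
entry of `π`. -/
def P231final {n : ℕ} (π : Equiv.Perm (Fin n)) : Prop :=
  ∃ i i' l : Fin n, (i' : ℕ) = (i : ℕ) + 1 ∧ (l : ℕ) = n - 1 ∧
    (i' : ℕ) < (l : ℕ) ∧ π l < π i ∧ π i < π i'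

/-- Occurrence of the vincular pattern ⟨1⟩⟨32⟩ where the `1` must be the first
entry of `π`. -/
def P132initial {n : ℕ} (π : Equiv.Perm (Fin n)) : Prop :=
  ∃ f j j' : Fin n, (f : ℕ) = 0 ∧ (j' : ℕ) = (j : ℕ) + 1 ∧
    0 < (j : ℕ) ∧ π f < π j' ∧ π j' < π j

/-- `π` avoids all six vincular patterns
⟨32⟩⟨41⟩, ⟨14⟩⟨23⟩, ⟨41⟩⟨32⟩, ⟨23⟩⟨14⟩, ⟨23⟩⟨1 final⟩, ⟨1 initial⟩⟨32⟩. -/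
def MemA {n : ℕ} (π : Equiv.Perm (Fin n)) : Prop :=
  ¬ P3241 π ∧ ¬ P1423 π ∧ ¬ P4132 π ∧ ¬ P2314 π ∧ ¬ P231final π ∧ ¬ P132initial π

/-- Any permutation that is decreasing before the position of its minimum value and
increasing after it lies in `A_n` (avoids the six vincular patterns).  Here the value
`1` of one-line notation is `0 : Fin n`. -/
theorem decreasing_one_increasing_memA (n : ℕ) (π : Equiv.Perm (Fin n)) (k : Fin n)
    (hk : (π k : ℕ) = 0)
    (hdec : ∀ i j : Fin n, i < j → j < k → π j < π i)
    (hinc : ∀ i j : Fin n, k < i → i < j → π i < π j) :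
    MemA π := by
  -- key facts: an ascent forces `k ≤ i`, a descent forces `i' ≤ k`.
  have hzero : ∀ m : Fin n, m ≠ k → 0 < (π m : ℕ) := by
    intro m hm
    rcases Nat.eq_zero_or_pos (π m : ℕ) with h | h
    · exfalso
      have : π m = π k := Fin.ext (by omega)
      exact hm (π.injective this)
    · exact h
  have asc : ∀ i i' : Fin n, (i' : ℕ) = (i : ℕ) + 1 → π i < π i' → (k : ℕ) ≤ (i : ℕ) := by
    intro i i' hii hlt
    by_contra h
    push_neg at h
    have hik : (i' : ℕ) ≤ (k : ℕ) := by omega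
    rcases eq_or_lt_of_le hik with he | hl
    · have heq : i' = k := Fin.ext he
      rw [heq] at hlt
      have := Fin.lt_def.mp hlt
      omega
    · have := hdec i i' (Fin.lt_def.mpr (by omega)) (Fin.lt_def.mpr hl)
      exact absurd hlt (not_lt.mpr (le_of_lt this))
  have desc : ∀ i i' : Fin n, (i' : ℕ) = (i : ℕ) + 1 → π i' < π i → (i' : ℕ) ≤ (k : ℕ) := by
    intro i i' hii hlt
    by_contra h
    push_neg at h
    have hki : (k : ℕ) ≤ (i : ℕ) := by omega
    rcases eq_or_lt_of_le hki with he | hl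
    · have : i = k := (Fin.ext he.symm)
      rw [this] at hlt
      have := Fin.lt_def.mp hlt
      omega
    · have := hinc i i' (Fin.lt_def.mpr hl) (Fin.lt_def.mpr (by omega))
      exact absurd hlt (not_lt.mpr (le_of_lt this))
  refine ⟨?_, ?_, ?_, ?_, ?_, ?_⟩
  · rintro ⟨i, i', j, j', hi, hj, hij, h1, h2, h3⟩
    -- both descents: π i' < π i, π j' < π j (since π j' < π i' < π i < π j)
    have d1 := desc i i' hi h2
    have d2 := desc j j' hj (lt_trans (lt_trans h1 h2) h3)
    -- i' < j < j' ≤ k, and i < i' < j < k so π j < π i'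
    have := hdec i' j (Fin.lt_def.mpr hij) (Fin.lt_def.mpr (by omega))
    exact absurd h3 (not_lt.mpr (le_of_lt (lt_trans this h2)))
  · rintro ⟨i, i', j, j', hi, hj, hij, h1, h2, h3⟩
    have a1 := asc i i' hi (lt_trans (lt_trans h1 h2) h3)
    have := hinc i' j (Fin.lt_def.mpr (by omega)) (Fin.lt_def.mpr hij)
    exact absurd this (not_lt.mpr (le_of_lt (lt_trans h2 h3)))
  · rintro ⟨i, i', j, j', hi, hj, hij, h1, h2, h3⟩
    have d2 := desc j j' hj h2
    rcases eq_or_lt_of_le d2 with he | hl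
    · have : j' = k := Fin.ext he
      rw [this] at h1
      have := Fin.lt_def.mp h1
      omega
    · -- i' < j < j' < k : π j' < π i' contradicts π i' < π j'
      have := hdec i' j' (Fin.lt_def.mpr (by omega)) (Fin.lt_def.mpr hl)
      exact absurd h1 (not_lt.mpr (le_of_lt this))
  · rintro ⟨i, i', j, j', hi, hj, hij, h1, h2, h3⟩
    have a1 := asc i i' hi h2
    -- k ≤ i < i' < j, so k < i' and π i' < π j
    have := hinc i' j (Fin.lt_def.mpr (by omega)) (Fin.lt_def.mpr hij)
    exact absurd this (not_lt.mpr (le_of_lt (lt_trans h1 h2)))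
  · rintro ⟨i, i', l, hi, hl, hil, h1, h2⟩
    have a1 := asc i i' hi h2
    have := hinc i' l (Fin.lt_def.mpr (by omega)) (Fin.lt_def.mpr hil)
    exact absurd this (not_lt.mpr (le_of_lt (lt_trans h1 h2)))
  · rintro ⟨f, j, j', hf, hj, hjpos, h1, h2⟩
    have d1 := desc j j' hj h2
    have := hdec f j (Fin.lt_def.mpr (by omega)) (Fin.lt_def.mpr (by omega))
    exact absurd this (not_lt.mpr (le_of_lt (lt_trans h1 h2)))
end

section
/- If π ∈ A_n (avoids the six vincular patterns ⟨32⟩⟨41⟩, ⟨14⟩⟨23⟩, ⟨41⟩⟨32⟩, ⟨23⟩⟨14⟩, ⟨23⟩·⟨1⟩(final), ⟨1⟩(initial)·⟨32⟩), then it is not the case that both π_1 < π_2 and π_{n−1} > π_n. -/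
/-- If `π ∈ A_n` then it is not the case that both `π₁ < π₂` and `π_{n−1} > π_n`. -/
theorem memA_not_ascent_descent (n : ℕ) (hn : 2 ≤ n) (π : Equiv.Perm (Fin n))
    (h : MemA π) :
    ¬ (π ⟨0, by omega⟩ < π ⟨1, by omega⟩ ∧
        π ⟨n - 1, by omega⟩ < π ⟨n - 2, by omega⟩) := by
  rintro ⟨h1, h2⟩
  rcases lt_or_ge n 3 with hn3 | hn3
  · -- n = 2 : the two hypotheses contradict each other
    have hn2 : n = 2 := by omega
    subst hn2
    exact absurd h1 (not_lt.2 h2.le)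
  · rcases lt_trichotomy (π ⟨n - 1, by omega⟩) (π ⟨0, by omega⟩) with hc | hc | hc
    · exact h.2.2.2.2.1 ⟨⟨0, by omega⟩, ⟨1, by omega⟩, ⟨n - 1, by omega⟩,
        rfl, rfl, by simp; omega, hc, h1⟩
    · have := π.injective hc
      simp only [Fin.mk.injEq] at this
      omega
    · exact h.2.2.2.2.2 ⟨⟨0, by omega⟩, ⟨n - 2, by omega⟩, ⟨n - 1, by omega⟩,
        rfl, by simp; omega, by simp; omega, hc, h2⟩
end

section
/- If π ∈ A_n and σ ∈ A_m, then the inflation π[σ] of π at the value 1 by σ lies in A_{n+m−1}. -/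
/-- The projection specification: `a` is the position of `π` corresponding to
position `p` of the inflation. -/
abbrev SpecP (n m : ℕ) (k : Fin n) (p : Fin (n + m - 1)) (a : Fin n) : Prop :=
  ((p : ℕ) < (k : ℕ) ∧ (a : ℕ) = (p : ℕ)) ∨
  ((k : ℕ) ≤ (p : ℕ) ∧ (p : ℕ) < (k : ℕ) + m ∧ (a : ℕ) = (k : ℕ)) ∨
  ((k : ℕ) + m ≤ (p : ℕ) ∧ (a : ℕ) + m - 1 = (p : ℕ))

/-- For each position `p` of the inflation, there is a projected position of `π`. -/
lemma spec_total (n m : ℕ) (hm : 1 ≤ m) (k : Fin n) (p : Fin (n + m - 1)) :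
    ∃ a : Fin n, SpecP n m k p a := by
  have hp := p.isLt; have hkk := k.isLt
  by_cases c1 : (p : ℕ) < (k : ℕ)
  · exact ⟨⟨(p : ℕ), by omega⟩, Or.inl ⟨c1, rfl⟩⟩
  · by_cases c2 : (p : ℕ) < (k : ℕ) + m
    · exact ⟨k, Or.inr (Or.inl ⟨by omega, c2, rfl⟩)⟩
    · exact ⟨⟨(p : ℕ) - m + 1, by omega⟩,
        Or.inr (Or.inr ⟨by omega, show (p : ℕ) - m + 1 + m - 1 = (p : ℕ) by omega⟩)⟩

/-- Projection sends adjacent positions (not both inside the block) to adjacent positions. -/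
lemma spec_adj (n m : ℕ) (hm : 1 ≤ m) (k : Fin n) (p p' : Fin (n + m - 1)) (a a' : Fin n)
    (hs : SpecP n m k p a) (hs' : SpecP n m k p' a')
    (hpp : (p' : ℕ) = (p : ℕ) + 1)
    (hni : ¬(((k : ℕ) ≤ (p : ℕ) ∧ (p : ℕ) < (k : ℕ) + m) ∧
      ((k : ℕ) ≤ (p' : ℕ) ∧ (p' : ℕ) < (k : ℕ) + m))) :
    (a' : ℕ) = (a : ℕ) + 1 := by
  rcases hs with h | h | h <;> rcases hs' with h' | h' | h' <;> omega

/-- Projection is strictly monotone on positions not both inside the block. -/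
lemma spec_mono (n m : ℕ) (hm : 1 ≤ m) (k : Fin n) (p q : Fin (n + m - 1)) (a b : Fin n)
    (hs : SpecP n m k p a) (hs' : SpecP n m k q b)
    (hpq : (p : ℕ) < (q : ℕ))
    (hni : ¬(((k : ℕ) ≤ (p : ℕ) ∧ (p : ℕ) < (k : ℕ) + m) ∧
      ((k : ℕ) ≤ (q : ℕ) ∧ (q : ℕ) < (k : ℕ) + m))) :
    (a : ℕ) < (b : ℕ) := by
  rcases hs with h | h | h <;> rcases hs' with h' | h' | h' <;> omega

/-- The last position of the inflation projects to the last position of `π`. -/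
lemma spec_last (n m : ℕ) (hn : 1 ≤ n) (hm : 1 ≤ m) (k : Fin n)
    (l : Fin (n + m - 1)) (w : Fin n) (hs : SpecP n m k l w)
    (hl : (l : ℕ) = n + m - 1 - 1) : (w : ℕ) = n - 1 := by
  have hkk := k.isLt
  rcases hs with h | h | h <;> omega

/-- The first position of the inflation projects to the first position of `π`. -/
lemma spec_first (n m : ℕ) (hm : 1 ≤ m) (k : Fin n)
    (f : Fin (n + m - 1)) (w : Fin n) (hs : SpecP n m k f w)
    (hf : (f : ℕ) = 0) : (w : ℕ) = 0 := by
  rcases hs with h | h | h <;> omega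

/-- If `π ∈ A_n` and `σ ∈ A_m`, then the inflation `π[σ]` of `π` at the value `1`
by `σ` lies in `A_{n+m−1}`.  Here `τ : S_{n+m−1}` is the inflation: if `k` is the
position of the minimal entry of `π` (the value `1`, i.e. `0 : Fin n`), then the
entries of `π` before position `k` appear shifted up by `m − 1`, then the block `σ`,
then the remaining entries of `π` shifted up by `m − 1`. -/
theorem inflation_memA (n m : ℕ) (hn : 1 ≤ n) (hm : 1 ≤ m)
    (π : Equiv.Perm (Fin n)) (σ : Equiv.Perm (Fin m))
    (hπ : MemA π) (hσ : MemA σ)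
    (k : Fin n) (hk : (π k : ℕ) = 0)
    (τ : Equiv.Perm (Fin (n + m - 1)))
    (h1 : ∀ i : Fin n, (hik : (i : ℕ) < (k : ℕ)) →
      (τ ⟨(i : ℕ), by omega⟩ : ℕ) = (π i : ℕ) + (m - 1))
    (h2 : ∀ j : Fin m,
      (τ ⟨(k : ℕ) + (j : ℕ), by have := k.isLt; have := j.isLt; omega⟩ : ℕ) = (σ j : ℕ))
    (h3 : ∀ i : Fin n, (hik : (k : ℕ) < (i : ℕ)) →
      (τ ⟨(i : ℕ) + m - 1, by have := i.isLt; omega⟩ : ℕ) = (π i : ℕ) + (m - 1)) :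
    MemA τ := by
  have hkn : (k : ℕ) < n := k.isLt
  simp only [MemA, P3241, P1423, P4132, P2314, P231final, P132initial, Fin.lt_def]
    at hπ hσ ⊢
  obtain ⟨hπ1, hπ2, hπ3, hπ4, hπ5, hπ6⟩ := hπ
  obtain ⟨hσ1, hσ2, hσ3, hσ4, hσ5, hσ6⟩ := hσ
  -- basic facts about values of π
  have hπ0 : ∀ p : Fin n, (π p : ℕ) = 0 → (p : ℕ) = (k : ℕ) := by
    intro p hp
    have h : π p = π k := Fin.ext (by omega)
    exact congrArg Fin.val (π.injective h)
  have hpos : ∀ p : Fin n, (p : ℕ) ≠ (k : ℕ) → 1 ≤ (π p : ℕ) := by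
    intro p hp
    rcases Nat.eq_zero_or_pos ((π p : ℕ)) with h | h
    · exact absurd (hπ0 p h) hp
    · exact h
  -- value of τ outside the block
  have hvalout : ∀ (p : Fin (n + m - 1)) (a : Fin n),
      SpecP n m k p a →
      ¬((k : ℕ) ≤ (p : ℕ) ∧ (p : ℕ) < (k : ℕ) + m) →
      (τ p : ℕ) = (π a : ℕ) + (m - 1) := by
    intro p a hs hout
    have hpl := p.isLt; have hal := a.isLt
    rcases hs with ⟨c1, c2⟩ | ⟨c1, c2, c3⟩ | ⟨c1, c2⟩
    · have hpe : p = ⟨(a : ℕ), by omega⟩ :=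
        Fin.ext (show (p : ℕ) = (a : ℕ) by omega)
      rw [hpe]; exact h1 a (by omega)
    · exact absurd ⟨c1, c2⟩ hout
    · have hpe : p = ⟨(a : ℕ) + m - 1, by omega⟩ :=
        Fin.ext (show (p : ℕ) = (a : ℕ) + m - 1 by omega)
      rw [hpe]; exact h3 a (by omega)
  -- value of τ inside the block
  have hvalin : ∀ (p : Fin (n + m - 1)) (c : Fin m),
      (k : ℕ) + (c : ℕ) = (p : ℕ) → (τ p : ℕ) = (σ c : ℕ) := by
    intro p c hc
    have hpe : p = ⟨(k : ℕ) + (c : ℕ), by have := c.isLt; omega⟩ :=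
      Fin.ext (show (p : ℕ) = (k : ℕ) + (c : ℕ) from hc.symm)
    rw [hpe]; exact h2 c
  have hlo : ∀ p : Fin (n + m - 1),
      (k : ℕ) ≤ (p : ℕ) → (p : ℕ) < (k : ℕ) + m → (τ p : ℕ) < m := by
    intro p hpa hpb
    have h := hvalin p ⟨(p : ℕ) - (k : ℕ), by omega⟩
      (show (k : ℕ) + ((p : ℕ) - (k : ℕ)) = (p : ℕ) by omega)
    rw [h]; exact (σ _).isLt
  have hhi : ∀ p : Fin (n + m - 1),
      ¬((k : ℕ) ≤ (p : ℕ) ∧ (p : ℕ) < (k : ℕ) + m) → m ≤ (τ p : ℕ) := by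
    intro p hp
    obtain ⟨a, hs⟩ := spec_total n m hm k p
    have he := hvalout p a hs hp
    have ha : 1 ≤ (π a : ℕ) := hpos a (by
      have := a.isLt; have := p.isLt
      rcases hs with ⟨c1, c2⟩ | ⟨c1, c2, c3⟩ | ⟨c1, c2⟩ <;> omega)
    omega
  -- value comparison transfer to π
  have vt : ∀ (p q : Fin (n + m - 1)) (a b : Fin n),
      SpecP n m k p a →
      SpecP n m k q b →
      ¬(((k : ℕ) ≤ (p : ℕ) ∧ (p : ℕ) < (k : ℕ) + m) ∧
        ((k : ℕ) ≤ (q : ℕ) ∧ (q : ℕ) < (k : ℕ) + m)) →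
      (τ p : ℕ) < (τ q : ℕ) → (π a : ℕ) < (π b : ℕ) := by
    intro p q a b hsp hsq hnb hlt
    by_cases hp : (k : ℕ) ≤ (p : ℕ) ∧ (p : ℕ) < (k : ℕ) + m
    · have hq : ¬((k : ℕ) ≤ (q : ℕ) ∧ (q : ℕ) < (k : ℕ) + m) := fun h => hnb ⟨hp, h⟩
      have hak : (a : ℕ) = (k : ℕ) := by
        rcases hsp with h | h | h <;> omega
      have hb1 : 1 ≤ (π b : ℕ) := hpos b (by
        rcases hsq with h | h | h <;> omega)
      have ha0 : (π a : ℕ) = 0 := by rw [Fin.ext hak]; exact hk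
      omega
    · by_cases hq : (k : ℕ) ≤ (q : ℕ) ∧ (q : ℕ) < (k : ℕ) + m
      · have := hhi p hp; have := hlo q hq.1 hq.2; omega
      · have := hvalout p a hsp hp; have := hvalout q b hsq hq; omega
  refine ⟨?_, ?_, ?_, ?_, ?_, ?_⟩
  -- ¬ P3241 τ
  · rintro ⟨i, i', j, j', hii, hjj, hij, v1, v2, v3⟩
    have hi1 := i.isLt; have hi2 := i'.isLt; have hj1 := j.isLt; have hj2 := j'.isLt
    by_cases hA : ((k : ℕ) ≤ (i : ℕ) ∧ (i : ℕ) < (k : ℕ) + m) ∧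
        ((k : ℕ) ≤ (i' : ℕ) ∧ (i' : ℕ) < (k : ℕ) + m)
    · by_cases hB : ((k : ℕ) ≤ (j : ℕ) ∧ (j : ℕ) < (k : ℕ) + m) ∧
          ((k : ℕ) ≤ (j' : ℕ) ∧ (j' : ℕ) < (k : ℕ) + m)
      · obtain ⟨ci, hci⟩ : ∃ c : Fin m, (c : ℕ) = (i : ℕ) - (k : ℕ) :=
          ⟨⟨(i : ℕ) - (k : ℕ), by omega⟩, rfl⟩
        obtain ⟨ci', hci'⟩ : ∃ c : Fin m, (c : ℕ) = (i' : ℕ) - (k : ℕ) :=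
          ⟨⟨(i' : ℕ) - (k : ℕ), by omega⟩, rfl⟩
        obtain ⟨cj, hcj⟩ : ∃ c : Fin m, (c : ℕ) = (j : ℕ) - (k : ℕ) :=
          ⟨⟨(j : ℕ) - (k : ℕ), by omega⟩, rfl⟩
        obtain ⟨cj', hcj'⟩ : ∃ c : Fin m, (c : ℕ) = (j' : ℕ) - (k : ℕ) :=
          ⟨⟨(j' : ℕ) - (k : ℕ), by omega⟩, rfl⟩
        have ei := hvalin i ci (by omega)
        have ei' := hvalin i' ci' (by omega)
        have ej := hvalin j cj (by omega)
        have ej' := hvalin j' cj' (by omega)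
        exact hσ1 ⟨ci, ci', cj, cj', by omega, by omega, by omega, by omega, by omega,
          by omega⟩
      · have ha := hhi j' (by omega)
        have hb := hlo i' hA.2.1 hA.2.2
        omega
    · by_cases hB : ((k : ℕ) ≤ (j : ℕ) ∧ (j : ℕ) < (k : ℕ) + m) ∧
          ((k : ℕ) ≤ (j' : ℕ) ∧ (j' : ℕ) < (k : ℕ) + m)
      · have ha := hhi i (by omega)
        have hb := hlo j hB.1.1 hB.1.2
        omega
      · by_cases hD : ((k : ℕ) ≤ (i' : ℕ) ∧ (i' : ℕ) < (k : ℕ) + m) ∧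
            ((k : ℕ) ≤ (j : ℕ) ∧ (j : ℕ) < (k : ℕ) + m)
        · have ha := hhi i (by omega)
          have hb := hlo j hD.2.1 hD.2.2
          omega
        · have s1 : ¬(((k : ℕ) ≤ (j' : ℕ) ∧ (j' : ℕ) < (k : ℕ) + m) ∧ ((k : ℕ) ≤ (i' : ℕ) ∧ (i' : ℕ) < (k : ℕ) + m)) := by omega
          have s2 : ¬(((k : ℕ) ≤ (i' : ℕ) ∧ (i' : ℕ) < (k : ℕ) + m) ∧ ((k : ℕ) ≤ (i : ℕ) ∧ (i : ℕ) < (k : ℕ) + m)) := by omega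
          have s3 : ¬(((k : ℕ) ≤ (i : ℕ) ∧ (i : ℕ) < (k : ℕ) + m) ∧ ((k : ℕ) ≤ (j : ℕ) ∧ (j : ℕ) < (k : ℕ) + m)) := by omega
          obtain ⟨a, hsa⟩ := spec_total n m hm k i
          obtain ⟨a', hsa'⟩ := spec_total n m hm k i'
          obtain ⟨b, hsb⟩ := spec_total n m hm k j
          obtain ⟨b', hsb'⟩ := spec_total n m hm k j'
          exact hπ1 ⟨a, a', b, b',
            spec_adj n m hm k i i' a a' hsa hsa' hii hA,
            spec_adj n m hm k j j' b b' hsb hsb' hjj hB,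
            spec_mono n m hm k i' j a' b hsa' hsb hij hD,
            vt j' i' b' a' hsb' hsa' s1 v1,
            vt i' i a' a hsa' hsa s2 v2,
            vt i j a b hsa hsb s3 v3⟩
  -- ¬ P1423 τ
  · rintro ⟨i, i', j, j', hii, hjj, hij, v1, v2, v3⟩
    have hi1 := i.isLt; have hi2 := i'.isLt; have hj1 := j.isLt; have hj2 := j'.isLt
    by_cases hA : ((k : ℕ) ≤ (i : ℕ) ∧ (i : ℕ) < (k : ℕ) + m) ∧
        ((k : ℕ) ≤ (i' : ℕ) ∧ (i' : ℕ) < (k : ℕ) + m)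
    · by_cases hB : ((k : ℕ) ≤ (j : ℕ) ∧ (j : ℕ) < (k : ℕ) + m) ∧
          ((k : ℕ) ≤ (j' : ℕ) ∧ (j' : ℕ) < (k : ℕ) + m)
      · obtain ⟨ci, hci⟩ : ∃ c : Fin m, (c : ℕ) = (i : ℕ) - (k : ℕ) :=
          ⟨⟨(i : ℕ) - (k : ℕ), by omega⟩, rfl⟩
        obtain ⟨ci', hci'⟩ : ∃ c : Fin m, (c : ℕ) = (i' : ℕ) - (k : ℕ) :=
          ⟨⟨(i' : ℕ) - (k : ℕ), by omega⟩, rfl⟩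
        obtain ⟨cj, hcj⟩ : ∃ c : Fin m, (c : ℕ) = (j : ℕ) - (k : ℕ) :=
          ⟨⟨(j : ℕ) - (k : ℕ), by omega⟩, rfl⟩
        obtain ⟨cj', hcj'⟩ : ∃ c : Fin m, (c : ℕ) = (j' : ℕ) - (k : ℕ) :=
          ⟨⟨(j' : ℕ) - (k : ℕ), by omega⟩, rfl⟩
        have ei := hvalin i ci (by omega)
        have ei' := hvalin i' ci' (by omega)
        have ej := hvalin j cj (by omega)
        have ej' := hvalin j' cj' (by omega)
        exact hσ2 ⟨ci, ci', cj, cj', by omega, by omega, by omega, by omega, by omega,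
          by omega⟩
      · have ha := hhi j' (by omega)
        have hb := hlo i' hA.2.1 hA.2.2
        omega
    · by_cases hB : ((k : ℕ) ≤ (j : ℕ) ∧ (j : ℕ) < (k : ℕ) + m) ∧
          ((k : ℕ) ≤ (j' : ℕ) ∧ (j' : ℕ) < (k : ℕ) + m)
      · have ha := hhi i (by omega)
        have hb := hlo j hB.1.1 hB.1.2
        omega
      · by_cases hD : ((k : ℕ) ≤ (i' : ℕ) ∧ (i' : ℕ) < (k : ℕ) + m) ∧
            ((k : ℕ) ≤ (j : ℕ) ∧ (j : ℕ) < (k : ℕ) + m)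
        · have ha := hhi j' (by omega)
          have hb := hlo i' hD.1.1 hD.1.2
          omega
        · have s1 : ¬(((k : ℕ) ≤ (i : ℕ) ∧ (i : ℕ) < (k : ℕ) + m) ∧ ((k : ℕ) ≤ (j : ℕ) ∧ (j : ℕ) < (k : ℕ) + m)) := by omega
          have s3 : ¬(((k : ℕ) ≤ (j' : ℕ) ∧ (j' : ℕ) < (k : ℕ) + m) ∧ ((k : ℕ) ≤ (i' : ℕ) ∧ (i' : ℕ) < (k : ℕ) + m)) := by omega
          obtain ⟨a, hsa⟩ := spec_total n m hm k i
          obtain ⟨a', hsa'⟩ := spec_total n m hm k i'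
          obtain ⟨b, hsb⟩ := spec_total n m hm k j
          obtain ⟨b', hsb'⟩ := spec_total n m hm k j'
          exact hπ2 ⟨a, a', b, b',
            spec_adj n m hm k i i' a a' hsa hsa' hii hA,
            spec_adj n m hm k j j' b b' hsb hsb' hjj hB,
            spec_mono n m hm k i' j a' b hsa' hsb hij hD,
            vt i j a b hsa hsb s1 v1,
            vt j j' b b' hsb hsb' hB v2,
            vt j' i' b' a' hsb' hsa' s3 v3⟩
  -- ¬ P4132 τ
  · rintro ⟨i, i', j, j', hii, hjj, hij, v1, v2, v3⟩
    have hi1 := i.isLt; have hi2 := i'.isLt; have hj1 := j.isLt; have hj2 := j'.isLt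
    by_cases hA : ((k : ℕ) ≤ (i : ℕ) ∧ (i : ℕ) < (k : ℕ) + m) ∧
        ((k : ℕ) ≤ (i' : ℕ) ∧ (i' : ℕ) < (k : ℕ) + m)
    · by_cases hB : ((k : ℕ) ≤ (j : ℕ) ∧ (j : ℕ) < (k : ℕ) + m) ∧
          ((k : ℕ) ≤ (j' : ℕ) ∧ (j' : ℕ) < (k : ℕ) + m)
      · obtain ⟨ci, hci⟩ : ∃ c : Fin m, (c : ℕ) = (i : ℕ) - (k : ℕ) :=
          ⟨⟨(i : ℕ) - (k : ℕ), by omega⟩, rfl⟩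
        obtain ⟨ci', hci'⟩ : ∃ c : Fin m, (c : ℕ) = (i' : ℕ) - (k : ℕ) :=
          ⟨⟨(i' : ℕ) - (k : ℕ), by omega⟩, rfl⟩
        obtain ⟨cj, hcj⟩ : ∃ c : Fin m, (c : ℕ) = (j : ℕ) - (k : ℕ) :=
          ⟨⟨(j : ℕ) - (k : ℕ), by omega⟩, rfl⟩
        obtain ⟨cj', hcj'⟩ : ∃ c : Fin m, (c : ℕ) = (j' : ℕ) - (k : ℕ) :=
          ⟨⟨(j' : ℕ) - (k : ℕ), by omega⟩, rfl⟩
        have ei := hvalin i ci (by omega)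
        have ei' := hvalin i' ci' (by omega)
        have ej := hvalin j cj (by omega)
        have ej' := hvalin j' cj' (by omega)
        exact hσ3 ⟨ci, ci', cj, cj', by omega, by omega, by omega, by omega, by omega,
          by omega⟩
      · by_cases hJ : (k : ℕ) ≤ (j : ℕ) ∧ (j : ℕ) < (k : ℕ) + m
        · have ha := hhi j' (by omega)
          have hb := hlo j hJ.1 hJ.2
          omega
        · have ha := hhi j (by omega)
          have hb := hlo i hA.1.1 hA.1.2
          omega
    · by_cases hB : ((k : ℕ) ≤ (j : ℕ) ∧ (j : ℕ) < (k : ℕ) + m) ∧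
          ((k : ℕ) ≤ (j' : ℕ) ∧ (j' : ℕ) < (k : ℕ) + m)
      · by_cases hI : (k : ℕ) ≤ (i' : ℕ) ∧ (i' : ℕ) < (k : ℕ) + m
        · -- i = k-1, i' = k : pattern ⟨1 initial⟩⟨32⟩ in σ
          obtain ⟨ci', hci'⟩ : ∃ c : Fin m, (c : ℕ) = (i' : ℕ) - (k : ℕ) :=
            ⟨⟨(i' : ℕ) - (k : ℕ), by omega⟩, rfl⟩
          obtain ⟨cj, hcj⟩ : ∃ c : Fin m, (c : ℕ) = (j : ℕ) - (k : ℕ) :=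
            ⟨⟨(j : ℕ) - (k : ℕ), by omega⟩, rfl⟩
          obtain ⟨cj', hcj'⟩ : ∃ c : Fin m, (c : ℕ) = (j' : ℕ) - (k : ℕ) :=
            ⟨⟨(j' : ℕ) - (k : ℕ), by omega⟩, rfl⟩
          have ei' := hvalin i' ci' (by omega)
          have ej := hvalin j cj (by omega)
          have ej' := hvalin j' cj' (by omega)
          exact hσ6 ⟨ci', cj, cj', by omega, by omega, by omega, by omega, by omega⟩
        · have ha := hhi i' (by omega)
          have hb := hlo j' hB.2.1 hB.2.2
          omega
      · by_cases hD : ((k : ℕ) ≤ (i' : ℕ) ∧ (i' : ℕ) < (k : ℕ) + m) ∧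
            ((k : ℕ) ≤ (j : ℕ) ∧ (j : ℕ) < (k : ℕ) + m)
        · have ha := hhi j' (by omega)
          have hb := hlo j hD.2.1 hD.2.2
          omega
        · have s1 : ¬(((k : ℕ) ≤ (i' : ℕ) ∧ (i' : ℕ) < (k : ℕ) + m) ∧ ((k : ℕ) ≤ (j' : ℕ) ∧ (j' : ℕ) < (k : ℕ) + m)) := by omega
          have s2 : ¬(((k : ℕ) ≤ (j' : ℕ) ∧ (j' : ℕ) < (k : ℕ) + m) ∧ ((k : ℕ) ≤ (j : ℕ) ∧ (j : ℕ) < (k : ℕ) + m)) := by omega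
          have s3 : ¬(((k : ℕ) ≤ (j : ℕ) ∧ (j : ℕ) < (k : ℕ) + m) ∧ ((k : ℕ) ≤ (i : ℕ) ∧ (i : ℕ) < (k : ℕ) + m)) := by omega
          obtain ⟨a, hsa⟩ := spec_total n m hm k i
          obtain ⟨a', hsa'⟩ := spec_total n m hm k i'
          obtain ⟨b, hsb⟩ := spec_total n m hm k j
          obtain ⟨b', hsb'⟩ := spec_total n m hm k j'
          exact hπ3 ⟨a, a', b, b',
            spec_adj n m hm k i i' a a' hsa hsa' hii hA,
            spec_adj n m hm k j j' b b' hsb hsb' hjj hB,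
            spec_mono n m hm k i' j a' b hsa' hsb hij hD,
            vt i' j' a' b' hsa' hsb' s1 v1,
            vt j' j b' b hsb' hsb s2 v2,
            vt j i b a hsb hsa s3 v3⟩
  -- ¬ P2314 τ
  · rintro ⟨i, i', j, j', hii, hjj, hij, v1, v2, v3⟩
    have hi1 := i.isLt; have hi2 := i'.isLt; have hj1 := j.isLt; have hj2 := j'.isLt
    by_cases hA : ((k : ℕ) ≤ (i : ℕ) ∧ (i : ℕ) < (k : ℕ) + m) ∧
        ((k : ℕ) ≤ (i' : ℕ) ∧ (i' : ℕ) < (k : ℕ) + m)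
    · by_cases hB : ((k : ℕ) ≤ (j : ℕ) ∧ (j : ℕ) < (k : ℕ) + m) ∧
          ((k : ℕ) ≤ (j' : ℕ) ∧ (j' : ℕ) < (k : ℕ) + m)
      · obtain ⟨ci, hci⟩ : ∃ c : Fin m, (c : ℕ) = (i : ℕ) - (k : ℕ) :=
          ⟨⟨(i : ℕ) - (k : ℕ), by omega⟩, rfl⟩
        obtain ⟨ci', hci'⟩ : ∃ c : Fin m, (c : ℕ) = (i' : ℕ) - (k : ℕ) :=
          ⟨⟨(i' : ℕ) - (k : ℕ), by omega⟩, rfl⟩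
        obtain ⟨cj, hcj⟩ : ∃ c : Fin m, (c : ℕ) = (j : ℕ) - (k : ℕ) :=
          ⟨⟨(j : ℕ) - (k : ℕ), by omega⟩, rfl⟩
        obtain ⟨cj', hcj'⟩ : ∃ c : Fin m, (c : ℕ) = (j' : ℕ) - (k : ℕ) :=
          ⟨⟨(j' : ℕ) - (k : ℕ), by omega⟩, rfl⟩
        have ei := hvalin i ci (by omega)
        have ei' := hvalin i' ci' (by omega)
        have ej := hvalin j cj (by omega)
        have ej' := hvalin j' cj' (by omega)
        exact hσ4 ⟨ci, ci', cj, cj', by omega, by omega, by omega, by omega, by omega,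
          by omega⟩
      · by_cases hJ : (k : ℕ) ≤ (j : ℕ) ∧ (j : ℕ) < (k : ℕ) + m
        · -- j = k + m - 1 : pattern ⟨23⟩⟨1 final⟩ in σ
          obtain ⟨ci, hci⟩ : ∃ c : Fin m, (c : ℕ) = (i : ℕ) - (k : ℕ) :=
            ⟨⟨(i : ℕ) - (k : ℕ), by omega⟩, rfl⟩
          obtain ⟨ci', hci'⟩ : ∃ c : Fin m, (c : ℕ) = (i' : ℕ) - (k : ℕ) :=
            ⟨⟨(i' : ℕ) - (k : ℕ), by omega⟩, rfl⟩
          obtain ⟨cj, hcj⟩ : ∃ c : Fin m, (c : ℕ) = (j : ℕ) - (k : ℕ) :=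
            ⟨⟨(j : ℕ) - (k : ℕ), by omega⟩, rfl⟩
          have ei := hvalin i ci (by omega)
          have ei' := hvalin i' ci' (by omega)
          have ej := hvalin j cj (by omega)
          exact hσ5 ⟨ci, ci', cj, by omega, by omega, by omega, by omega, by omega⟩
        · have ha := hhi j (by omega)
          have hb := hlo i hA.1.1 hA.1.2
          omega
    · by_cases hB : ((k : ℕ) ≤ (j : ℕ) ∧ (j : ℕ) < (k : ℕ) + m) ∧
          ((k : ℕ) ≤ (j' : ℕ) ∧ (j' : ℕ) < (k : ℕ) + m)
      · by_cases hI : (k : ℕ) ≤ (i' : ℕ) ∧ (i' : ℕ) < (k : ℕ) + m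
        · have ha := hhi i (by omega)
          have hb := hlo i' hI.1 hI.2
          omega
        · have ha := hhi i' (by omega)
          have hb := hlo j' hB.2.1 hB.2.2
          omega
      · by_cases hD : ((k : ℕ) ≤ (i' : ℕ) ∧ (i' : ℕ) < (k : ℕ) + m) ∧
            ((k : ℕ) ≤ (j : ℕ) ∧ (j : ℕ) < (k : ℕ) + m)
        · have ha := hhi i (by omega)
          have hb := hlo i' hD.1.1 hD.1.2
          omega
        · have s1 : ¬(((k : ℕ) ≤ (j : ℕ) ∧ (j : ℕ) < (k : ℕ) + m) ∧ ((k : ℕ) ≤ (i : ℕ) ∧ (i : ℕ) < (k : ℕ) + m)) := by omega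
          have s3 : ¬(((k : ℕ) ≤ (i' : ℕ) ∧ (i' : ℕ) < (k : ℕ) + m) ∧ ((k : ℕ) ≤ (j' : ℕ) ∧ (j' : ℕ) < (k : ℕ) + m)) := by omega
          obtain ⟨a, hsa⟩ := spec_total n m hm k i
          obtain ⟨a', hsa'⟩ := spec_total n m hm k i'
          obtain ⟨b, hsb⟩ := spec_total n m hm k j
          obtain ⟨b', hsb'⟩ := spec_total n m hm k j'
          exact hπ4 ⟨a, a', b, b',
            spec_adj n m hm k i i' a a' hsa hsa' hii hA,
            spec_adj n m hm k j j' b b' hsb hsb' hjj hB,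
            spec_mono n m hm k i' j a' b hsa' hsb hij hD,
            vt j i b a hsb hsa s1 v1,
            vt i i' a a' hsa hsa' hA v2,
            vt i' j' a' b' hsa' hsb' s3 v3⟩
  -- ¬ P231final τ
  · rintro ⟨i, i', l, hii, hl, hil, v1, v2⟩
    have hi1 := i.isLt; have hi2 := i'.isLt; have hl1 := l.isLt
    by_cases hA : ((k : ℕ) ≤ (i : ℕ) ∧ (i : ℕ) < (k : ℕ) + m) ∧
        ((k : ℕ) ≤ (i' : ℕ) ∧ (i' : ℕ) < (k : ℕ) + m)
    · by_cases hL : (k : ℕ) ≤ (l : ℕ) ∧ (l : ℕ) < (k : ℕ) + m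
      · obtain ⟨ci, hci⟩ : ∃ c : Fin m, (c : ℕ) = (i : ℕ) - (k : ℕ) :=
          ⟨⟨(i : ℕ) - (k : ℕ), by omega⟩, rfl⟩
        obtain ⟨ci', hci'⟩ : ∃ c : Fin m, (c : ℕ) = (i' : ℕ) - (k : ℕ) :=
          ⟨⟨(i' : ℕ) - (k : ℕ), by omega⟩, rfl⟩
        obtain ⟨cl, hcl⟩ : ∃ c : Fin m, (c : ℕ) = (l : ℕ) - (k : ℕ) :=
          ⟨⟨(l : ℕ) - (k : ℕ), by omega⟩, rfl⟩
        have ei := hvalin i ci (by omega)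
        have ei' := hvalin i' ci' (by omega)
        have el := hvalin l cl (by omega)
        exact hσ5 ⟨ci, ci', cl, by omega, by omega, by omega, by omega, by omega⟩
      · have ha := hhi l (by omega)
        have hb := hlo i hA.1.1 hA.1.2
        omega
    · by_cases hI : (k : ℕ) ≤ (i' : ℕ) ∧ (i' : ℕ) < (k : ℕ) + m
      · have ha := hhi i (by omega)
        have hb := hlo i' hI.1 hI.2
        omega
      · by_cases hII : (k : ℕ) ≤ (i : ℕ) ∧ (i : ℕ) < (k : ℕ) + m
        · have ha := hhi l (by omega)
          have hb := hlo i hII.1 hII.2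
          omega
        · have s1 : ¬(((k : ℕ) ≤ (l : ℕ) ∧ (l : ℕ) < (k : ℕ) + m) ∧ ((k : ℕ) ≤ (i : ℕ) ∧ (i : ℕ) < (k : ℕ) + m)) := by omega
          have s2 : ¬(((k : ℕ) ≤ (i : ℕ) ∧ (i : ℕ) < (k : ℕ) + m) ∧ ((k : ℕ) ≤ (i' : ℕ) ∧ (i' : ℕ) < (k : ℕ) + m)) := by omega
          have s3 : ¬(((k : ℕ) ≤ (i' : ℕ) ∧ (i' : ℕ) < (k : ℕ) + m) ∧ ((k : ℕ) ≤ (l : ℕ) ∧ (l : ℕ) < (k : ℕ) + m)) := by omega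
          obtain ⟨a, hsa⟩ := spec_total n m hm k i
          obtain ⟨a', hsa'⟩ := spec_total n m hm k i'
          obtain ⟨w, hsw⟩ := spec_total n m hm k l
          exact hπ5 ⟨a, a', w,
            spec_adj n m hm k i i' a a' hsa hsa' hii s2,
            spec_last n m hn hm k l w hsw hl,
            spec_mono n m hm k i' l a' w hsa' hsw hil s3,
            vt l i w a hsw hsa s1 v1,
            vt i i' a a' hsa hsa' s2 v2⟩
  -- ¬ P132initial τ
  · rintro ⟨f, j, j', hf, hjj, hj0, v1, v2⟩
    have hf1 := f.isLt; have hj1 := j.isLt; have hj2 := j'.isLt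
    by_cases hB : ((k : ℕ) ≤ (j : ℕ) ∧ (j : ℕ) < (k : ℕ) + m) ∧
        ((k : ℕ) ≤ (j' : ℕ) ∧ (j' : ℕ) < (k : ℕ) + m)
    · by_cases hF : (k : ℕ) ≤ (f : ℕ) ∧ (f : ℕ) < (k : ℕ) + m
      · obtain ⟨cf, hcf⟩ : ∃ c : Fin m, (c : ℕ) = (f : ℕ) - (k : ℕ) :=
          ⟨⟨(f : ℕ) - (k : ℕ), by omega⟩, rfl⟩
        obtain ⟨cj, hcj⟩ : ∃ c : Fin m, (c : ℕ) = (j : ℕ) - (k : ℕ) :=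
          ⟨⟨(j : ℕ) - (k : ℕ), by omega⟩, rfl⟩
        obtain ⟨cj', hcj'⟩ : ∃ c : Fin m, (c : ℕ) = (j' : ℕ) - (k : ℕ) :=
          ⟨⟨(j' : ℕ) - (k : ℕ), by omega⟩, rfl⟩
        have ef := hvalin f cf (by omega)
        have ej := hvalin j cj (by omega)
        have ej' := hvalin j' cj' (by omega)
        exact hσ6 ⟨cf, cj, cj', by omega, by omega, by omega, by omega, by omega⟩
      · have ha := hhi f (by omega)
        have hb := hlo j' hB.2.1 hB.2.2
        omega
    · by_cases hJ : (k : ℕ) ≤ (j' : ℕ) ∧ (j' : ℕ) < (k : ℕ) + m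
      · have ha := hhi f (by omega)
        have hb := hlo j' hJ.1 hJ.2
        omega
      · by_cases hJ2 : (k : ℕ) ≤ (j : ℕ) ∧ (j : ℕ) < (k : ℕ) + m
        · have ha := hhi j' (by omega)
          have hb := hlo j hJ2.1 hJ2.2
          omega
        · have s1 : ¬(((k : ℕ) ≤ (f : ℕ) ∧ (f : ℕ) < (k : ℕ) + m) ∧ ((k : ℕ) ≤ (j' : ℕ) ∧ (j' : ℕ) < (k : ℕ) + m)) := by omega
          have s2 : ¬(((k : ℕ) ≤ (j' : ℕ) ∧ (j' : ℕ) < (k : ℕ) + m) ∧ ((k : ℕ) ≤ (j : ℕ) ∧ (j : ℕ) < (k : ℕ) + m)) := by omega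
          have s3 : ¬(((k : ℕ) ≤ (f : ℕ) ∧ (f : ℕ) < (k : ℕ) + m) ∧ ((k : ℕ) ≤ (j : ℕ) ∧ (j : ℕ) < (k : ℕ) + m)) := by omega
          have s4 : ¬(((k : ℕ) ≤ (j : ℕ) ∧ (j : ℕ) < (k : ℕ) + m) ∧ ((k : ℕ) ≤ (j' : ℕ) ∧ (j' : ℕ) < (k : ℕ) + m)) := by omega
          obtain ⟨wf, hswf⟩ := spec_total n m hm k f
          obtain ⟨b, hsb⟩ := spec_total n m hm k j
          obtain ⟨b', hsb'⟩ := spec_total n m hm k j'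
          have h0 := spec_first n m hm k f wf hswf hf
          have hmono := spec_mono n m hm k f j wf b hswf hsb (by omega) s3
          exact hπ6 ⟨wf, b, b', h0,
            spec_adj n m hm k j j' b b' hsb hsb' hjj s4,
            by omega,
            vt f j' wf b' hswf hsb' s1 v1,
            vt j' j b' b hsb' hsb s2 v2⟩
end
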